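/- arXiv:2402.06612 — 4 statements merged into one kernel-verified Lean document; each statement's English description precedes it below -/
import Mathlib

section
/- Let w be a uniformly recurrent right-infinite word over Σ = {x_1, …, x_n} in which every letter of Σ occurs, and let A = A_w (equivalently, A is a projectively simple monomial algebra with non-redundant presentation). Then every graded F-algebra automorphism φ of A is a composition of a torus action with a permutation of the generators: there exist λ_1, …, λ_n ∈ F^× and a permutation σ ∈ S_n such that φ(x_i) = λ_i x_{σ(i)} for every 1 ≤ i ≤ n. -/
noncomputable section

open scoped BigOperators

/-- The free associative `F`-algebra on `m` generators, realized as the monoid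
algebra of the free monoid on `Fin m`. -/
abbrev FreeAlg (F : Type) [Field F] (m : ℕ) : Type :=
  MonoidAlgebra F (FreeMonoid (Fin m))

variable (F : Type) [Field F] {m : ℕ}

/-- The element of the free algebra corresponding to a word `u`. -/
def wordElem (u : List (Fin m)) : FreeAlg F m :=
  MonoidAlgebra.of F (FreeMonoid (Fin m)) (FreeMonoid.ofList u)

/-- The relation identifying the forbidden words in `W` with `0`. -/
def monRel (W : Set (List (Fin m))) : FreeAlg F m → FreeAlg F m → Prop :=
  fun a b => (∃ u ∈ W, a = wordElem F u) ∧ b = 0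

/-- The monomial algebra `F⟨x_1,…,x_m⟩/⟨W⟩` determined by the set `W` of forbidden
words. -/
abbrev MonAlg (W : Set (List (Fin m))) : Type :=
  RingQuot (monRel F W)

/-- The canonical projection from the free algebra onto the monomial algebra. -/
def monAlgPi (W : Set (List (Fin m))) : FreeAlg F m →ₐ[F] MonAlg F W :=
  RingQuot.mkAlgHom F (monRel F W)

/-- The image of the word `u` in the monomial algebra; `u` is a *nonzero monomial*
of the monomial algebra iff `mono F W u ≠ 0`. -/
def mono (W : Set (List (Fin m))) (u : List (Fin m)) : MonAlg F W :=
  monAlgPi F W (wordElem F u)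

/-- The degree-`d` homogeneous component of the monomial algebra, spanned by the
images of the words of length `d`. -/
def homog (W : Set (List (Fin m))) (d : ℕ) : Submodule F (MonAlg F W) :=
  Submodule.span F { a | ∃ u : List (Fin m), u.length = d ∧ a = mono F W u }
/-- The set of finite factors (subwords) of the right-infinite word `w`. -/
def factorsOf (w : ℕ → Fin m) : Set (List (Fin m)) :=
  { u | ∃ i : ℕ, u = (List.range u.length).map fun k => w (i + k) }

/-- `w` is uniformly recurrent: every factor `u` of `w` occurs in every sufficiently
long factor of `w`. -/
def UniformlyRecurrent (w : ℕ → Fin m) : Prop :=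
  ∀ u ∈ factorsOf w, ∃ C : ℕ, ∀ v ∈ factorsOf w, v.length = C → u <:+: v

/-- `w` is eventually periodic. -/
def EventuallyPeriodic (w : ℕ → Fin m) : Prop :=
  ∃ p : ℕ, 0 < p ∧ ∃ N : ℕ, ∀ i : ℕ, N ≤ i → w (i + p) = w i


section S12Aux

variable {n : ℕ} {w : ℕ → Fin n}


lemma window_mem (w : ℕ → Fin n) (i N : ℕ) :
    ((List.range N).map fun k => w (i + k)) ∈ factorsOf w := ⟨i, by simp⟩

lemma nil_mem (w : ℕ → Fin n) : ([] : List (Fin n)) ∈ factorsOf w := ⟨0, by simp⟩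

lemma infix_mem {u v : List (Fin n)} (h : u <:+: v) (hv : v ∈ factorsOf w) :
    u ∈ factorsOf w := by
  obtain ⟨i, hi⟩ := hv
  obtain ⟨s, t, hst⟩ := h
  refine ⟨i + s.length, ?_⟩
  apply List.ext_getElem (by simp)
  intro k h1 h2
  have hk : s.length + k < v.length := by
    subst hst; simp; omega
  have h3 : s.length + k < (s ++ u).length := by simp; omega
  have key : u[k]'h1 = v[s.length + k]'hk := by
    subst hst
    rw [List.getElem_append_left h3, List.getElem_append_right (by simp)]
    congr 1; omega
  rw [key, List.getElem_of_eq hi]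
  simp [List.getElem_range]
  congr 1; omega

lemma suffix_mem {u v : List (Fin n)} (h : u <:+ v) (hv : v ∈ factorsOf w) :
    u ∈ factorsOf w := infix_mem h.isInfix hv

lemma single_mem (hall : ∀ j : Fin n, ∃ i : ℕ, w i = j) (a : Fin n) :
    [a] ∈ factorsOf w := by
  obtain ⟨i, hi⟩ := hall a
  exact ⟨i, by simp [List.range_succ, hi]⟩

open Finsupp
open scoped Classical


/-- prepend-letter operator with factor check -/
def Tw (F : Type) [Field F] (w : ℕ → Fin n) (j : Fin n) :
    Module.End F (FreeMonoid (Fin n) →₀ F) :=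
  Finsupp.lsum F fun u =>
    if (j :: FreeMonoid.toList u) ∈ factorsOf w
    then (Finsupp.lsingle (FreeMonoid.ofList (j :: FreeMonoid.toList u)) : F →ₗ[F] _)
    else 0

lemma Tw_single (j : Fin n) (u : List (Fin n)) (r : F) :
    Tw F w j (Finsupp.single (FreeMonoid.ofList u) r) =
      if (j :: u) ∈ factorsOf w then Finsupp.single (FreeMonoid.ofList (j :: u)) r
      else 0 := by
  rw [Tw, Finsupp.lsum_single]
  split_ifs with h <;> simp_all [FreeMonoid.toList_ofList]

/-- the operator algebra morphism from the free algebra -/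
def Psi (F : Type) [Field F] (w : ℕ → Fin n) :
    FreeAlg F n →ₐ[F] Module.End F (FreeMonoid (Fin n) →₀ F) :=
  MonoidAlgebra.lift F _ (FreeMonoid (Fin n)) (FreeMonoid.lift (Tw F w))

lemma Psi_wordElem (u : List (Fin n)) :
    Psi F w (wordElem F u) = FreeMonoid.lift (Tw F w) (FreeMonoid.ofList u) := by
  rw [Psi, wordElem, MonoidAlgebra.lift_of]

lemma opEval (u p : List (Fin n)) (hp : p ∈ factorsOf w) :
    FreeMonoid.lift (Tw F w) (FreeMonoid.ofList u)
      (Finsupp.single (FreeMonoid.ofList p) (1 : F)) =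
    if (u ++ p) ∈ factorsOf w then Finsupp.single (FreeMonoid.ofList (u ++ p)) 1
    else 0 := by
  induction u with
  | nil => simp [hp]
  | cons j u ih =>
      rw [FreeMonoid.ofList_cons, map_mul, Module.End.mul_apply, ih,
        FreeMonoid.lift_eval_of]
      by_cases h : (u ++ p) ∈ factorsOf w
      · rw [if_pos h, Tw_single]
        rfl
      · rw [if_neg h, map_zero, if_neg]
        intro hcon
        exact h (infix_mem ⟨[j], [], by simp⟩ hcon)

lemma opEval' (u p : List (Fin n)) :
    FreeMonoid.lift (Tw F w) (FreeMonoid.ofList u)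
      (Finsupp.single (FreeMonoid.ofList p) (1 : F)) =
    if (∀ k < u.length, u.drop k ++ p ∈ factorsOf w)
    then Finsupp.single (FreeMonoid.ofList (u ++ p)) 1 else 0 := by
  induction u with
  | nil => simp
  | cons j u ih =>
      rw [FreeMonoid.ofList_cons, map_mul, Module.End.mul_apply, ih,
        FreeMonoid.lift_eval_of]
      by_cases h : ∀ k < u.length, u.drop k ++ p ∈ factorsOf w
      · rw [if_pos h, Tw_single]
        by_cases h0 : (j :: (u ++ p)) ∈ factorsOf w
        · rw [if_pos h0, if_pos]
          · rfl
          intro k hk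
          match k with
          | 0 => simpa using h0
          | (k+1) => simpa using h k (by simpa using hk)
        · rw [if_neg h0, if_neg]
          intro hcon
          exact h0 (by simpa using hcon 0 (by simp))
      · rw [if_neg h, map_zero, if_neg]
        intro hcon
        exact h fun k hk => by simpa using hcon (k+1) (by simpa using hk)

lemma Psi_zero_of_notMem {u : List (Fin n)} (hu : u ∉ factorsOf w) :
    Psi F w (wordElem F u) = 0 := by
  rw [Psi_wordElem]
  apply Finsupp.lhom_ext
  intro q r
  have hq : Finsupp.single q r = r • Finsupp.single q (1:F) := by
    rw [Finsupp.smul_single, smul_eq_mul, mul_one]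
  have hq2 : q = FreeMonoid.ofList (FreeMonoid.toList q) := rfl
  rw [hq, map_smul, hq2, opEval', if_neg, smul_zero, LinearMap.zero_apply]
  intro hcon
  have h0 : 0 < u.length := by
    rcases u with _ | _
    · exact absurd (nil_mem w) hu
    · simp
  exact hu (infix_mem (v := u ++ FreeMonoid.toList q) ⟨[], FreeMonoid.toList q, by simp⟩
    (by simpa using hcon 0 h0))

lemma Psi_rel {a b : FreeAlg F n} (h : monRel F (factorsOf w)ᶜ a b) :
    Psi F w a = Psi F w b := by
  obtain ⟨⟨u, hu, rfl⟩, rfl⟩ := h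
  rw [map_zero, Psi_zero_of_notMem F hu]

def Phihat (F : Type) [Field F] (w : ℕ → Fin n) :
    MonAlg F ((factorsOf w)ᶜ) →ₐ[F] Module.End F (FreeMonoid (Fin n) →₀ F) :=
  RingQuot.liftAlgHom F ⟨Psi F w, fun _ _ h => Psi_rel F h⟩

lemma Phihat_mono (u : List (Fin n)) :
    Phihat F w (mono F ((factorsOf w)ᶜ) u) = FreeMonoid.lift (Tw F w) (FreeMonoid.ofList u) := by
  rw [Phihat, mono, monAlgPi, RingQuot.liftAlgHom_mkAlgHom_apply, Psi_wordElem]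

/-- evaluation of the algebra at the empty word -/
def ev (F : Type) [Field F] (w : ℕ → Fin n) :
    MonAlg F ((factorsOf w)ᶜ) →ₗ[F] (FreeMonoid (Fin n) →₀ F) :=
  (LinearMap.applyₗ (Finsupp.single (FreeMonoid.ofList []) (1:F))).comp
    (Phihat F w).toLinearMap

lemma ev_mono (u : List (Fin n)) :
    ev F w (mono F ((factorsOf w)ᶜ) u) =
      if u ∈ factorsOf w then Finsupp.single (FreeMonoid.ofList u) (1:F) else 0 := by
  have : ev F w (mono F ((factorsOf w)ᶜ) u) =
      FreeMonoid.lift (Tw F w) (FreeMonoid.ofList u)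
        (Finsupp.single (FreeMonoid.ofList []) (1:F)) := by
    rw [ev]; simp [Phihat_mono]
  rw [this, opEval F u [] (nil_mem w)]
  simp

lemma mono_zero_of_notMem {u : List (Fin n)} (hu : u ∉ factorsOf w) :
    mono F ((factorsOf w)ᶜ) u = 0 := by
  have : monRel F ((factorsOf w)ᶜ) (wordElem F u) 0 := ⟨⟨u, hu, rfl⟩, rfl⟩
  have h2 := RingQuot.mkAlgHom_rel F this
  rw [mono, monAlgPi, h2, map_zero]

lemma mono_mul (u v : List (Fin n)) (W : Set (List (Fin n))) :
    mono F W u * mono F W v = mono F W (u ++ v) := by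
  rw [mono, mono, mono, wordElem, wordElem, wordElem, FreeMonoid.ofList_append,
    map_mul, map_mul]

lemma mono_prod (u : List (Fin n)) (W : Set (List (Fin n))) :
    mono F W u = (u.map fun a => mono F W [a]).prod := by
  induction u with
  | nil =>
      simp only [List.map_nil, List.prod_nil]
      rw [mono, wordElem, FreeMonoid.ofList_nil, map_one, map_one]
  | cons a u ih =>
      have : (a :: u) = [a] ++ u := rfl
      rw [this, ← mono_mul, ih]
      simp

lemma ofList_inj {u v : List (Fin n)} (h : FreeMonoid.ofList u = FreeMonoid.ofList v) :
    u = v := FreeMonoid.ofList.injective h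

lemma Tw_apply_cons (e b : Fin n) (q : List (Fin n)) (f : FreeMonoid (Fin n) →₀ F) :
    (Tw F w e f) (FreeMonoid.ofList (b :: q)) =
      if e = b ∧ (b :: q) ∈ factorsOf w then f (FreeMonoid.ofList q) else 0 := by
  induction f using Finsupp.induction_linear with
  | zero => simp
  | add f g hf hg =>
      rw [map_add, Finsupp.add_apply, hf, hg, Finsupp.add_apply]
      split_ifs <;> simp
  | single a r =>
      have ha : a = FreeMonoid.ofList (FreeMonoid.toList a) := rfl
      rw [ha, Tw_single]
      split_ifs with h1 h2 h2
      · obtain ⟨rfl, -⟩ := h2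
        simp [Finsupp.single_apply, EmbeddingLike.apply_eq_iff_eq, List.cons.injEq]
      · rw [Finsupp.single_apply, if_neg]
        intro heq
        obtain ⟨rfl, rfl⟩ : e = b ∧ FreeMonoid.toList a = q := by
          have h3 := ofList_inj heq
          rw [List.cons.injEq] at h3
          exact h3
        exact h2 ⟨rfl, h1⟩
      · obtain ⟨rfl, hmem⟩ := h2
        simp only [Finsupp.coe_zero, Pi.zero_apply]
        have hne : ¬ FreeMonoid.ofList (FreeMonoid.toList a) = FreeMonoid.ofList q := by
          intro heq
          have h3 := ofList_inj heq
          subst h3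
          exact h1 hmem
        rw [Finsupp.single_apply, if_neg hne]
      · simp

end S12Aux

/-- Let `w` be a uniformly recurrent right-infinite word over
`{x_1,…,x_n}` in which every letter occurs, and `A = A_w` the associated
projectively simple monomial algebra (non-redundant presentation).  Then every
graded algebra automorphism of `A` is the composition of a torus action and a
permutation of the generators: `φ(x_i) = λ_i x_{σ(i)}` with `λ_i ∈ F^×`, `σ ∈ S_n`. -/
theorem statement12 (F : Type) [Field F] (n : ℕ) (w : ℕ → Fin n)
    (hur : UniformlyRecurrent w) (hall : ∀ j : Fin n, ∃ i : ℕ, w i = j)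
    (φ : MonAlg F ((factorsOf w)ᶜ) ≃ₐ[F] MonAlg F ((factorsOf w)ᶜ))
    (hgraded : ∀ d : ℕ, ∀ a ∈ homog F ((factorsOf w)ᶜ) d,
        φ a ∈ homog F ((factorsOf w)ᶜ) d) :
    ∃ (lam : Fin n → F) (σ : Equiv.Perm (Fin n)), (∀ i, lam i ≠ 0) ∧
      ∀ i : Fin n, φ (mono F ((factorsOf w)ᶜ) [i]) =
        lam i • mono F ((factorsOf w)ᶜ) [σ i] := by
  classical
  have hXmem : ∀ a : Fin n, (mono F ((factorsOf w)ᶜ) [a]) ∈ homog F ((factorsOf w)ᶜ) 1 :=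
    fun a => Submodule.subset_span ⟨[a], rfl, rfl⟩
  have hhom1 : homog F ((factorsOf w)ᶜ) 1 =
      Submodule.span F (Set.range fun a : Fin n => mono F ((factorsOf w)ᶜ) [a]) := by
    unfold homog
    congr 1
    ext z
    constructor
    · rintro ⟨u, hu, rfl⟩
      obtain ⟨x, rfl⟩ := List.length_eq_one_iff.mp hu
      exact ⟨x, rfl⟩
    · rintro ⟨e, rfl⟩
      exact ⟨[e], rfl, rfl⟩
  set c : Fin n → Fin n → F :=
    fun a e => ev F w (φ (mono F ((factorsOf w)ᶜ) [a])) (FreeMonoid.ofList [e]) with hc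
  have hevX : ∀ e : Fin n, ev F w (mono F ((factorsOf w)ᶜ) [e]) =
      Finsupp.single (FreeMonoid.ofList [e]) (1:F) := by
    intro e
    rw [ev_mono, if_pos (single_mem hall e)]
  have evalsum : ∀ (γ : Fin n → F) (e₀ : Fin n),
      ((∑ e, γ e • Finsupp.single (FreeMonoid.ofList [e]) (1:F)) : FreeMonoid (Fin n) →₀ F)
        (FreeMonoid.ofList [e₀]) = γ e₀ := by
    intro γ e₀
    rw [Finsupp.finset_sum_apply]
    rw [Finset.sum_eq_single e₀]
    · simp
    · intro e _ hne
      rw [Finsupp.smul_apply, Finsupp.single_apply, if_neg, smul_zero]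
      intro hcon
      exact hne (by simpa using ofList_inj hcon)
    · simp
  have hexpand : ∀ a, φ (mono F ((factorsOf w)ᶜ) [a]) =
      ∑ e, c a e • mono F ((factorsOf w)ᶜ) [e] := by
    intro a
    have h1 : φ (mono F ((factorsOf w)ᶜ) [a]) ∈
        Submodule.span F (Set.range fun a : Fin n => mono F ((factorsOf w)ᶜ) [a]) :=
      hhom1 ▸ hgraded 1 _ (hXmem a)
    obtain ⟨β, hβ⟩ := (Submodule.mem_span_range_iff_exists_fun F).mp h1
    have hev : ∀ e₀, c a e₀ = β e₀ := by
      intro e₀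
      have h2 : ev F w (φ (mono F ((factorsOf w)ᶜ) [a])) =
          ∑ e, β e • Finsupp.single (FreeMonoid.ofList [e]) (1:F) := by
        rw [← hβ, map_sum]
        exact Finset.sum_congr rfl fun e _ => by rw [map_smul, hevX]
      rw [hc]
      simp only []
      rw [h2, evalsum]
    rw [← hβ]
    exact Finset.sum_congr rfl fun e _ => by rw [hev e]
  have hTX : ∀ e : Fin n, Phihat F w (mono F ((factorsOf w)ᶜ) [e]) = Tw F w e := by
    intro e
    rw [Phihat_mono, FreeMonoid.ofList_singleton, FreeMonoid.lift_eval_of]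
  have hSpoint : ∀ (a b : Fin n) (q : List (Fin n)) (f : FreeMonoid (Fin n) →₀ F),
      (Phihat F w (φ (mono F ((factorsOf w)ᶜ) [a])) f) (FreeMonoid.ofList (b :: q)) =
        if (b :: q) ∈ factorsOf w then c a b * f (FreeMonoid.ofList q) else 0 := by
    intro a b q f
    rw [hexpand, map_sum]
    rw [LinearMap.sum_apply, Finsupp.finset_sum_apply]
    have hterm : ∀ e : Fin n,
        ((Phihat F w (c a e • mono F ((factorsOf w)ᶜ) [e])) f) (FreeMonoid.ofList (b :: q)) =
          c a e * (if e = b ∧ (b :: q) ∈ factorsOf w then f (FreeMonoid.ofList q) else 0) := by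
      intro e
      rw [map_smul, hTX, LinearMap.smul_apply, Finsupp.smul_apply, Tw_apply_cons, smul_eq_mul]
    rw [Finset.sum_congr rfl fun e _ => hterm e]
    by_cases hm : (b :: q) ∈ factorsOf w
    · rw [if_pos hm, Finset.sum_eq_single b]
      · rw [if_pos ⟨rfl, hm⟩]
      · intro e _ hne
        rw [if_neg (fun hcon => hne hcon.1), mul_zero]
      · simp
    · rw [if_neg hm, Finset.sum_eq_zero]
      intro e _
      rw [if_neg (fun hcon => hm hcon.2), mul_zero]
  have hmain : ∀ (u v : List (Fin n)), u.length = v.length → v ∈ factorsOf w →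
      (ev F w (φ (mono F ((factorsOf w)ᶜ) u))) (FreeMonoid.ofList v) =
        (List.zipWith (fun a b => c a b) u v).prod := by
    intro u
    induction u with
    | nil =>
        intro v hlen hv
        obtain rfl : v = [] := by
          cases v
          · rfl
          · simp at hlen
        have h1 : mono F ((factorsOf w)ᶜ) ([] : List (Fin n)) = 1 := by
          rw [mono, wordElem, FreeMonoid.ofList_nil, map_one, map_one]
        rw [h1, map_one, ← h1, ev_mono, if_pos (nil_mem w)]
        simp
    | cons a u ih =>
        intro v hlen hv
        obtain ⟨b, q, rfl⟩ : ∃ b q, v = b :: q := by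
          cases v with
          | nil => simp at hlen
          | cons b q => exact ⟨b, q, rfl⟩
        have hsplit : φ (mono F ((factorsOf w)ᶜ) (a :: u)) =
            φ (mono F ((factorsOf w)ᶜ) [a]) * φ (mono F ((factorsOf w)ᶜ) u) := by
          rw [← map_mul, mono_mul]
          rfl
        have hev2 : ev F w (φ (mono F ((factorsOf w)ᶜ) [a]) * φ (mono F ((factorsOf w)ᶜ) u)) =
            Phihat F w (φ (mono F ((factorsOf w)ᶜ) [a])) (ev F w (φ (mono F ((factorsOf w)ᶜ) u))) := by
          rw [ev]
          simp only [LinearMap.coe_comp, Function.comp_apply, AlgHom.toLinearMap_apply,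
            LinearMap.applyₗ_apply_apply, map_mul, Module.End.mul_apply]
        rw [hsplit, hev2, hSpoint, if_pos hv,
          ih q (by simpa using hlen) (suffix_mem ⟨[b], rfl⟩ hv)]
        simp
  have hfd : FiniteDimensional F (homog F ((factorsOf w)ᶜ) 1) := by
    rw [hhom1]
    exact FiniteDimensional.span_of_finite F (Set.finite_range _)
  have hmapeq : Submodule.map (φ.toLinearEquiv : _ →ₗ[F] _) (homog F ((factorsOf w)ᶜ) 1) =
      homog F ((factorsOf w)ᶜ) 1 := by
    apply Submodule.eq_of_le_of_finrank_le
    · rintro _ ⟨y, hy, rfl⟩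
      exact hgraded 1 y hy
    · rw [LinearEquiv.finrank_map_eq]
  have hcolstar : ∀ b : Fin n, ∃ α : Fin n → F,
      ∀ e, (∑ a, α a * c a e) = (if e = b then 1 else 0) := by
    intro b
    have hXb : mono F ((factorsOf w)ᶜ) [b] ∈
        Submodule.map (φ.toLinearEquiv : _ →ₗ[F] _) (homog F ((factorsOf w)ᶜ) 1) :=
      by rw [hmapeq]; exact hXmem b
    obtain ⟨y, hy, hyx⟩ := hXb
    rw [hhom1] at hy
    obtain ⟨α, hα⟩ := (Submodule.mem_span_range_iff_exists_fun F).mp hy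
    refine ⟨α, fun e => ?_⟩
    have hφy : φ y = mono F ((factorsOf w)ᶜ) [b] := hyx
    have h1 : mono F ((factorsOf w)ᶜ) [b] =
        ∑ a, α a • (∑ e', c a e' • mono F ((factorsOf w)ᶜ) [e']) := by
      rw [← hφy, ← hα, map_sum]
      exact Finset.sum_congr rfl fun a _ => by rw [map_smul, hexpand]
    have h2 := congrArg (fun z => (ev F w z) (FreeMonoid.ofList [e])) h1
    rw [hevX b] at h2
    have hL : (Finsupp.single (FreeMonoid.ofList [b]) (1:F)) (FreeMonoid.ofList [e]) =
        (if e = b then 1 else 0) := by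
      rw [Finsupp.single_apply]
      by_cases he : e = b
      · rw [if_pos (by rw [he]), if_pos he]
      · rw [if_neg, if_neg he]
        intro hcon
        exact he (by simpa using (ofList_inj hcon).symm)
    rw [hL] at h2
    rw [h2, map_sum, Finsupp.finset_sum_apply]
    refine Finset.sum_congr rfl fun a _ => ?_
    rw [map_smul, Finsupp.smul_apply, smul_eq_mul]
    congr 1
    have h3 : ev F w (∑ e', c a e' • mono F ((factorsOf w)ᶜ) [e']) =
        ∑ e', c a e' • Finsupp.single (FreeMonoid.ofList [e']) (1:F) := by
      rw [map_sum]
      exact Finset.sum_congr rfl fun e' _ => by rw [map_smul, hevX]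
    rw [h3, evalsum]
  have hcolNonzero : ∀ e : Fin n, ∃ a, c a e ≠ 0 := by
    intro e
    by_contra hcon
    push_neg at hcon
    obtain ⟨α, hα⟩ := hcolstar e
    have := hα e
    rw [if_pos rfl] at this
    rw [Finset.sum_eq_zero (fun a _ => by rw [hcon a, mul_zero])] at this
    exact one_ne_zero this.symm
  have hK1 : ∀ (e1 e2 : Fin n), e1 ≠ e2 → ∀ i : Fin n,
      (∀ a, a ≠ i → c a e1 = 0) → (∀ a, a ≠ i → c a e2 = 0) → False := by
    intro e1 e2 hne i h1 h2
    obtain ⟨α, hα⟩ := hcolstar e1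
    have he1 : (∑ a, α a * c a e1) = 1 := by rw [hα, if_pos rfl]
    have he2 : (∑ a, α a * c a e2) = 0 := by rw [hα, if_neg (fun hcon => hne hcon.symm)]
    rw [Finset.sum_eq_single i (fun a _ ha => by rw [h1 a ha, mul_zero]) (by simp)] at he1
    rw [Finset.sum_eq_single i (fun a _ ha => by rw [h2 a ha, mul_zero]) (by simp)] at he2
    have hαi : α i ≠ 0 := fun hz => by rw [hz, zero_mul] at he1; exact one_ne_zero he1.symm
    have hci : c i e2 = 0 := by
      rcases mul_eq_zero.mp he2 with h | h
      · exact absurd h hαi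
      · exact h
    obtain ⟨a, ha⟩ := hcolNonzero e2
    rcases Classical.em (a = i) with rfl | hne2
    · exact ha hci
    · exact ha (h2 a hne2)
  have huniq : ∀ e : Fin n, ∃! a : Fin n, c a e ≠ 0 := by
    by_contra hcon
    push_neg at hcon
    obtain ⟨e₀, he₀⟩ := hcon
    set S : Finset (Fin n) := Finset.univ.filter (fun e => ∃! a, c a e ≠ 0) with hS
    have he₀S : e₀ ∉ S := by
      intro hmem
      exact he₀ (by simpa [hS] using hmem)
    set g : Fin n → Fin n := fun e => if h : ∃! a, c a e ≠ 0 then h.choose else e₀ with hg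
    have hcard : (S.image g).card < n := by
      calc (S.image g).card ≤ S.card := Finset.card_image_le
        _ < Finset.univ.card := Finset.card_lt_card ⟨Finset.subset_univ S,
            fun h => he₀S (h (Finset.mem_univ e₀))⟩
        _ = n := by simp
    obtain ⟨i₀, hi₀⟩ : ∃ i₀ : Fin n, i₀ ∉ S.image g := by
      by_contra hall2
      push_neg at hall2
      have h1 : (Finset.univ : Finset (Fin n)) ⊆ S.image g := fun i _ => hall2 i
      have h2 := Finset.card_le_card h1
      rw [Finset.card_univ, Fintype.card_fin] at h2
      omega
    have hchoice : ∀ e : Fin n, ∃ a, a ≠ i₀ ∧ c a e ≠ 0 := by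
      intro e
      by_contra hcon2
      push_neg at hcon2
      obtain ⟨a, ha⟩ := hcolNonzero e
      have huf : ∀ y, c y e ≠ 0 → y = a := by
        intro y hy
        by_contra hne
        have hyi : y = i₀ := by
          by_contra hne2
          exact hy (hcon2 y hne2)
        have hai : a = i₀ := by
          by_contra hne2
          exact ha (hcon2 a hne2)
        exact hne (hyi.trans hai.symm)
      have hu : ∃! a', c a' e ≠ 0 := ⟨a, ha, huf⟩
      have heS : e ∈ S := by
        rw [hS, Finset.mem_filter]
        exact ⟨Finset.mem_univ e, hu⟩
      have hgspec : c (g e) e ≠ 0 := by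
        rw [hg]
        simp only [dif_pos hu]
        exact hu.choose_spec.1
      have hge : g e = a := huf _ hgspec
      have hai : a = i₀ := by
        by_contra hne2
        exact ha (hcon2 a hne2)
      exact hi₀ (Finset.mem_image.mpr ⟨e, heS, by rw [hge, hai]⟩)
    obtain ⟨C, hC⟩ := hur [i₀] (single_mem hall i₀)
    have hvmem : ((List.range C).map fun k => w (0 + k)) ∈ factorsOf w := window_mem w 0 C
    set v : List (Fin n) := (List.range C).map (fun k => w (0 + k)) with hv
    have hvlen : v.length = C := by simp [hv]
    set gq : Fin n → Fin n := fun b => (hchoice b).choose with hgq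
    have hgq1 : ∀ b, (gq b) ≠ i₀ := fun b => (hchoice b).choose_spec.1
    have hgq2 : ∀ b, c (gq b) b ≠ 0 := fun b => (hchoice b).choose_spec.2
    have hprod : ∀ v' : List (Fin n), (List.zipWith (fun a b => c a b) (v'.map gq) v').prod ≠ 0 := by
      intro v'
      induction v' with
      | nil => simp
      | cons b q ih =>
          simp only [List.map_cons, List.zipWith_cons_cons, List.prod_cons]
          exact mul_ne_zero (hgq2 b) ih
    have humem : (v.map gq) ∈ factorsOf w := by
      by_contra hu
      have h0 : mono F ((factorsOf w)ᶜ) (v.map gq) = 0 := mono_zero_of_notMem F hu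
      have hm2 := hmain (v.map gq) v (by simp) hvmem
      rw [h0, map_zero, map_zero] at hm2
      exact hprod v (by rw [← hm2]; simp)
    have hinf := hC (v.map gq) humem (by simp [hvlen])
    have hmem2 : i₀ ∈ v.map gq := hinf.sublist.subset (by simp)
    obtain ⟨b, _, hb⟩ := List.mem_map.mp hmem2
    exact (hgq1 b) hb
  set τ : Fin n → Fin n := fun e => (huniq e).choose with hτ
  have hτ1 : ∀ e, c (τ e) e ≠ 0 := fun e => (huniq e).choose_spec.1
  have hτu : ∀ e a, c a e ≠ 0 → a = τ e := fun e a ha => (huniq e).choose_spec.2 a ha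
  have hτinj : Function.Injective τ := by
    intro e1 e2 heq
    by_contra hne
    apply hK1 e1 e2 hne (τ e1)
    · intro a ha
      by_contra hz
      exact ha (hτu e1 a hz)
    · intro a ha
      by_contra hz
      rw [heq] at ha
      exact ha (hτu e2 a hz)
  have hτbij : Function.Bijective τ := Finite.injective_iff_bijective.mp hτinj
  set τe : Equiv.Perm (Fin n) := Equiv.ofBijective τ hτbij with hτe
  have hτe_app : ∀ e, τe e = τ e := fun e => rfl
  refine ⟨fun a => c a (τe.symm a), τe.symm, fun a => ?_, fun i => ?_⟩
  · have h1 : τ (τe.symm a) = a := by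
      rw [← hτe_app]
      exact τe.apply_symm_apply a
    have := hτ1 (τe.symm a)
    rwa [h1] at this
  · rw [hexpand i, Finset.sum_eq_single (τe.symm i)]
    · intro e _ hne
      have hz : c i e = 0 := by
        by_contra hz
        apply hne
        have h2 : i = τ e := hτu e i hz
        have h3 : τe e = i := by rw [hτe_app, ← h2]
        rw [← h3, Equiv.symm_apply_apply]
      rw [hz, zero_smul]
    · simp
end
end

section
/- Let w and w' be uniformly recurrent right-infinite words over Σ = {x_1, …, x_n} in which every letter occurs, and let A = A_w and B = A_{w'} (projectively simple monomial algebras). Then every graded F-algebra isomorphism f : A → B is given by a permutation and scaling of the generators: there exist λ_1, …, λ_n ∈ F^× and σ ∈ S_n with f(x_i) = λ_i x_{σ(i)} for all i. -/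
noncomputable section

open scoped BigOperators

variable (F : Type) [Field F] {m : ℕ}

-- ## basics

theorem wordElem_eq_single (u : List (Fin m)) :
    wordElem F u = MonoidAlgebra.single (FreeMonoid.ofList u) (1 : F) := rfl

theorem wordElem_append (u v : List (Fin m)) :
    wordElem F (u ++ v) = wordElem F u * wordElem F v := by
  rw [wordElem_eq_single, wordElem_eq_single, wordElem_eq_single,
    MonoidAlgebra.single_mul_single, one_mul, FreeMonoid.ofList_append]

theorem mono_append (W : Set (List (Fin m))) (u v : List (Fin m)) :
    mono F W (u ++ v) = mono F W u * mono F W v := by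
  simp [mono, wordElem_append, map_mul]

theorem mono_nil (W : Set (List (Fin m))) : mono F W [] = 1 := by
  have : wordElem F ([] : List (Fin m)) = 1 := rfl
  simp [mono, this]

theorem mono_zero (W : Set (List (Fin m))) {u : List (Fin m)} (hu : u ∈ W) :
    mono F W u = 0 := by
  have : mono F W u = monAlgPi F W 0 := by
    exact RingQuot.mkAlgHom_rel F (show monRel F W (wordElem F u) 0 from ⟨⟨u, hu, rfl⟩, rfl⟩)
  simpa using this

-- ## extension-closed forbidden sets

def ExtClosed (W : Set (List (Fin m))) : Prop :=
  ∀ u v : List (Fin m), u ∈ W → u ++ v ∈ W ∧ v ++ u ∈ W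

def forbidSpan (W : Set (List (Fin m))) : Submodule F (FreeAlg F m) :=
  Submodule.span F { a | ∃ v ∈ W, a = wordElem F v }

theorem forbidSpan_mul_right {W : Set (List (Fin m))} (hW : ExtClosed W)
    {x : FreeAlg F m} (hx : x ∈ forbidSpan F W) (c : FreeAlg F m) :
    x * c ∈ forbidSpan F W := by
  induction hx using Submodule.span_induction with
  | mem a ha =>
    obtain ⟨v, hv, rfl⟩ := ha
    induction c using MonoidAlgebra.induction with
    | zero => simp
    | single_add g b cc _ _ ih =>
      rw [mul_add]
      refine Submodule.add_mem _ ?_ ih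
      have : wordElem F v * MonoidAlgebra.single g b
          = b • wordElem F (v ++ FreeMonoid.toList g) := by
        rw [wordElem_eq_single, wordElem_eq_single, MonoidAlgebra.single_mul_single]
        simp [Finsupp.smul_single, FreeMonoid.ofList_append]
      rw [this]
      exact Submodule.smul_mem _ _ (Submodule.subset_span ⟨_, (hW v _ hv).1, rfl⟩)
  | zero => simp
  | add a b _ _ iha ihb => rw [add_mul]; exact Submodule.add_mem _ iha ihb
  | smul r a _ ih => rw [smul_mul_assoc]; exact Submodule.smul_mem _ _ ih

theorem forbidSpan_mul_left {W : Set (List (Fin m))} (hW : ExtClosed W)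
    {x : FreeAlg F m} (hx : x ∈ forbidSpan F W) (c : FreeAlg F m) :
    c * x ∈ forbidSpan F W := by
  induction hx using Submodule.span_induction with
  | mem a ha =>
    obtain ⟨v, hv, rfl⟩ := ha
    induction c using MonoidAlgebra.induction with
    | zero => simp
    | single_add g b cc _ _ ih =>
      rw [add_mul]
      refine Submodule.add_mem _ ?_ ih
      have : MonoidAlgebra.single g b * wordElem F v
          = b • wordElem F (FreeMonoid.toList g ++ v) := by
        rw [wordElem_eq_single, wordElem_eq_single, MonoidAlgebra.single_mul_single]
        simp [Finsupp.smul_single, FreeMonoid.ofList_append]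
      rw [this]
      exact Submodule.smul_mem _ _ (Submodule.subset_span ⟨_, (hW v _ hv).2, rfl⟩)
  | zero => simp
  | add a b _ _ iha ihb => rw [mul_add]; exact Submodule.add_mem _ iha ihb
  | smul r a _ ih => rw [mul_smul_comm]; exact Submodule.smul_mem _ _ ih

theorem rel_sub_mem {W : Set (List (Fin m))} (hW : ExtClosed W)
    {a b : FreeAlg F m} (h : RingQuot.Rel (monRel F W) a b) :
    a - b ∈ forbidSpan F W := by
  induction h with
  | of h =>
    simp only [monRel] at h
    obtain ⟨⟨u, hu, rfl⟩, rfl⟩ := h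
    have : wordElem F u ∈ forbidSpan F W :=
      Submodule.subset_span (show _ ∈ { a | ∃ v ∈ W, a = wordElem F v } from ⟨u, hu, rfl⟩)
    simpa using this
  | add_left _ ih => simpa using ih
  | mul_left _ ih =>
    rename_i a b c _
    have := forbidSpan_mul_right F hW ih c
    simpa [sub_mul] using this
  | mul_right _ ih =>
    rename_i a b c _
    have := forbidSpan_mul_left F hW ih a
    simpa [mul_sub] using this

-- ## the coefficient functional

variable {F}

theorem epsAux_wordElem (u v : List (Fin m)) :
    (wordElem F v).coeff (FreeMonoid.ofList u) = if v = u then (1 : F) else 0 := by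
  classical
  rw [wordElem_eq_single, MonoidAlgebra.single_apply]
  by_cases h : v = u
  · subst h; simp
  · rw [if_neg (fun hh => h (FreeMonoid.ofList.injective hh)), if_neg h]

theorem epsAux_forbid {W : Set (List (Fin m))} {u : List (Fin m)} (hu : u ∉ W)
    {x : FreeAlg F m} (hx : x ∈ forbidSpan F W) :
    x.coeff (FreeMonoid.ofList u) = 0 := by
  induction hx using Submodule.span_induction with
  | mem a ha =>
    obtain ⟨v, hv, rfl⟩ := ha
    rw [epsAux_wordElem]
    have : v ≠ u := by rintro rfl; exact hu hv
    simp [this]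
  | zero => rfl
  | add a b _ _ iha ihb =>
    have : (a + b).coeff (FreeMonoid.ofList u) = a.coeff (FreeMonoid.ofList u) + b.coeff (FreeMonoid.ofList u) := rfl
    rw [this, iha, ihb, add_zero]
  | smul r a _ ih =>
    have : (r • a).coeff (FreeMonoid.ofList u) = r * a.coeff (FreeMonoid.ofList u) := rfl
    rw [this, ih, mul_zero]

theorem eps_key {W : Set (List (Fin m))} (hW : ExtClosed W) {u : List (Fin m)} (hu : u ∉ W) :
    ∀ a b : FreeAlg F m, RingQuot.Rel (monRel F W) a b →
      a.coeff (FreeMonoid.ofList u) = b.coeff (FreeMonoid.ofList u) := by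
  intro a b h
  have h2 := epsAux_forbid hu (rel_sub_mem F hW h)
  have h3 : (a - b).coeff (FreeMonoid.ofList u)
      = a.coeff (FreeMonoid.ofList u) - b.coeff (FreeMonoid.ofList u) := rfl
  rw [h3] at h2
  exact sub_eq_zero.mp h2

/-- The coefficient-of-`u` functional, as a bare function. -/
def epsFun {W : Set (List (Fin m))} (hW : ExtClosed W) {u : List (Fin m)} (hu : u ∉ W) :
    MonAlg F W → F :=
  fun x => Quot.lift (fun a : FreeAlg F m => a.coeff (FreeMonoid.ofList u)) (eps_key hW hu) x.toQuot

theorem epsFun_pi {W : Set (List (Fin m))} (hW : ExtClosed W) {u : List (Fin m)} (hu : u ∉ W)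
    (a : FreeAlg F m) : epsFun hW hu (monAlgPi F W a) = a.coeff (FreeMonoid.ofList u) := by
  show epsFun hW hu (RingQuot.mkAlgHom F (monRel F W) a) = _
  rw [RingQuot.mkAlgHom_def]
  show epsFun hW hu (RingQuot.mkRingHom (monRel F W) a) = _
  rw [RingQuot.mkRingHom_def]
  rfl

/-- The coefficient-of-`u` linear functional on the monomial algebra. -/
def eps {W : Set (List (Fin m))} (hW : ExtClosed W) {u : List (Fin m)} (hu : u ∉ W) :
    MonAlg F W →ₗ[F] F where
  toFun := epsFun hW hu
  map_add' := by
    intro x y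
    obtain ⟨a, rfl⟩ := RingQuot.mkAlgHom_surjective F (monRel F W) x
    obtain ⟨b, rfl⟩ := RingQuot.mkAlgHom_surjective F (monRel F W) y
    rw [← map_add]
    show epsFun hW hu (monAlgPi F W (a + b))
      = epsFun hW hu (monAlgPi F W a) + epsFun hW hu (monAlgPi F W b)
    rw [epsFun_pi, epsFun_pi, epsFun_pi]
    rfl
  map_smul' := by
    intro r x
    obtain ⟨a, rfl⟩ := RingQuot.mkAlgHom_surjective F (monRel F W) x
    rw [← map_smul]
    show epsFun hW hu (monAlgPi F W (r • a)) = r * epsFun hW hu (monAlgPi F W a)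
    rw [epsFun_pi, epsFun_pi]
    rfl

theorem eps_mono {W : Set (List (Fin m))} (hW : ExtClosed W) {u : List (Fin m)} (hu : u ∉ W)
    (v : List (Fin m)) : eps hW hu (mono F W v) = if v = u then (1 : F) else 0 := by
  show epsFun hW hu (monAlgPi F W (wordElem F v)) = _
  rw [epsFun_pi, epsAux_wordElem]

theorem mem_factorsOf_iff {w : ℕ → Fin m} {u : List (Fin m)} :
    u ∈ factorsOf w ↔ ∃ i : ℕ, ∀ k : ℕ, (hk : k < u.length) → u[k] = w (i + k) := by
  constructor
  · rintro ⟨i, hi⟩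
    refine ⟨i, fun k hk => ?_⟩
    rw [List.getElem_of_eq hi hk]
    simp
  · rintro ⟨i, hi⟩
    refine ⟨i, ?_⟩
    apply List.ext_getElem
    · simp
    · intro k h1 h2
      simp [hi k h1]

theorem factorsOf_append_left {w : ℕ → Fin m} {u v : List (Fin m)}
    (h : u ++ v ∈ factorsOf w) : u ∈ factorsOf w := by
  rw [mem_factorsOf_iff] at h ⊢
  obtain ⟨i, hi⟩ := h
  refine ⟨i, fun k hk => ?_⟩
  have h2 : k < (u ++ v).length := by simp; omega
  have := hi k h2
  rwa [List.getElem_append_left hk] at this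

theorem factorsOf_append_right {w : ℕ → Fin m} {u v : List (Fin m)}
    (h : u ++ v ∈ factorsOf w) : v ∈ factorsOf w := by
  rw [mem_factorsOf_iff] at h ⊢
  obtain ⟨i, hi⟩ := h
  refine ⟨i + u.length, fun k hk => ?_⟩
  have h2 : u.length + k < (u ++ v).length := by simp; omega
  have := hi (u.length + k) h2
  rw [List.getElem_append_right (by omega)] at this
  simpa [Nat.add_assoc] using this

theorem extClosed_compl_factors (w : ℕ → Fin m) : ExtClosed ((factorsOf w)ᶜ) := by
  intro u v hu
  constructor
  · intro h; exact hu (factorsOf_append_left h)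
  · intro h; exact hu (factorsOf_append_right h)

/-- The length-`d` factor of `w` starting at `i`. -/
theorem snippet_mem (w : ℕ → Fin m) (i d : ℕ) :
    ((List.range d).map fun k => w (i + k)) ∈ factorsOf w := by
  refine ⟨i, ?_⟩
  congr 1
  simp

theorem snippet_length (w : ℕ → Fin m) (i d : ℕ) :
    ((List.range d).map fun k => w (i + k)).length = d := by simp

theorem singleton_mem_factorsOf {w : ℕ → Fin m} {j : Fin m} (h : ∃ i, w i = j) :
    [j] ∈ factorsOf w := by
  obtain ⟨i, hi⟩ := h
  rw [mem_factorsOf_iff]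
  refine ⟨i, fun k hk => ?_⟩
  have hk0 : k = 0 := by simpa using Nat.lt_one_iff.mp (by simpa using hk)
  subst hk0
  simpa using hi.symm

-- ## expansion of the image of a monomial under an algebra map

section Expansion

variable {n : ℕ} {W W' : Set (List (Fin n))}

theorem expansion (g : MonAlg F W →ₐ[F] MonAlg F W') (c : Fin n → Fin n → F)
    (hg : ∀ i, g (mono F W [i]) = ∑ j, c i j • mono F W' [j]) :
    ∀ u : List (Fin n), g (mono F W u) =
      ∑ v : Fin u.length → Fin n,
        (∏ k, c (u.get k) (v k)) • mono F W' (List.ofFn v) := by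
  intro u
  induction u with
  | nil =>
    rw [mono_nil, map_one]
    letI : IsEmpty (Fin ([] : List (Fin n)).length) := Fin.isEmpty
    rw [Fintype.sum_unique]
    rw [show (List.ofFn (default : Fin ([] : List (Fin n)).length → Fin n)) = [] from rfl]
    rw [mono_nil]
    rw [show (Finset.univ : Finset (Fin ([] : List (Fin n)).length)) = ∅ from rfl]
    simp
  | cons i t ih =>
    have h1 : mono F W (i :: t) = mono F W [i] * mono F W t :=
      mono_append F W [i] t
    rw [h1, map_mul, hg, ih, Finset.sum_mul_sum]
    rw [← Fintype.sum_prod_type']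
    refine Fintype.sum_equiv (Fin.consEquiv (fun _ => Fin n)) _ _ ?_
    rintro ⟨j, v⟩
    have e1 : (c i j • mono F W' [j]) * ((∏ k, c (t.get k) (v k)) • mono F W' (List.ofFn v))
        = (c i j * ∏ k, c (t.get k) (v k)) • (mono F W' [j] * mono F W' (List.ofFn v)) := by
      rw [smul_mul_smul_comm]
    rw [e1]
    have e2 : mono F W' [j] * mono F W' (List.ofFn v) = mono F W' (j :: List.ofFn v) :=
      (mono_append F W' [j] (List.ofFn v)).symm
    rw [e2]
    have e3 : (Fin.consEquiv (fun _ => Fin n)) (j, v) = Fin.cons j v := rfl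
    rw [e3]
    congr 1
    · show c i j * (∏ k : Fin t.length, c (t.get k) (v k))
        = ∏ k : Fin (t.length + 1), c ((i :: t).get k)
            ((Fin.cons j v : ∀ _ : Fin (t.length + 1), Fin n) k)
      rw [Fin.prod_univ_succ]
      simp [Fin.cons_succ]
    · show mono F W' (j :: List.ofFn v)
        = mono F W' (List.ofFn (Fin.cons j v : Fin (t.length + 1) → Fin n))
      rw [List.ofFn_succ]
      simp [Fin.cons_succ]

theorem expansion_fn (g : MonAlg F W →ₐ[F] MonAlg F W') (c : Fin n → Fin n → F)
    (hg : ∀ i, g (mono F W [i]) = ∑ j, c i j • mono F W' [j]) {d : ℕ}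
    (U : Fin d → Fin n) :
    g (mono F W (List.ofFn U)) =
      ∑ V : Fin d → Fin n, (∏ k, c (U k) (V k)) • mono F W' (List.ofFn V) := by
  rw [expansion g c hg]
  refine Fintype.sum_equiv
    (Equiv.arrowCongr (finCongr ((List.length_ofFn (f := U)))) (Equiv.refl (Fin n))) _ _ ?_
  intro v
  have hmono : List.ofFn v = List.ofFn
      ((Equiv.arrowCongr (finCongr ((List.length_ofFn (f := U)))) (Equiv.refl (Fin n))) v) := by
    apply List.ext_getElem
    · simp
    · intro k h1 h2
      simp [List.getElem_ofFn, Equiv.arrowCongr]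
  have hprod : (∏ k, c ((List.ofFn U).get k) (v k))
      = ∏ k, c (U k)
          (((Equiv.arrowCongr (finCongr ((List.length_ofFn (f := U)))) (Equiv.refl (Fin n))) v) k) := by
    refine Fintype.prod_equiv (finCongr ((List.length_ofFn (f := U)))) _ _ ?_
    intro k
    rw [List.get_ofFn]
    simp [Equiv.arrowCongr, finCongr]
  rw [hmono, hprod]

theorem expansion_coeff (hW' : ExtClosed W') (g : MonAlg F W →ₐ[F] MonAlg F W')
    (c : Fin n → Fin n → F)
    (hg : ∀ i, g (mono F W [i]) = ∑ j, c i j • mono F W' [j]) {d : ℕ}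
    (U V : Fin d → Fin n) (hV : List.ofFn V ∉ W') :
    eps hW' hV (g (mono F W (List.ofFn U))) = ∏ k, c (U k) (V k) := by
  rw [expansion_fn g c hg, map_sum]
  have key : ∀ v : Fin d → Fin n,
      eps hW' hV ((∏ k, c (U k) (v k)) • mono F W' (List.ofFn v))
        = if v = V then ∏ k, c (U k) (v k) else 0 := by
    intro v
    rw [map_smul, eps_mono hW' hV, smul_eq_mul]
    by_cases h : v = V
    · subst h; simp
    · have : List.ofFn v ≠ List.ofFn V := fun hh => h (List.ofFn_inj.mp hh)
      simp [this, h]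
  rw [Finset.sum_congr rfl fun v _ => key v]
  simp

theorem vanish (hW' : ExtClosed W') (g : MonAlg F W →ₐ[F] MonAlg F W')
    (c : Fin n → Fin n → F)
    (hg : ∀ i, g (mono F W [i]) = ∑ j, c i j • mono F W' [j]) {d : ℕ}
    (U V : Fin d → Fin n) (hU : List.ofFn U ∈ W) (hV : List.ofFn V ∉ W') :
    ∏ k, c (U k) (V k) = 0 := by
  have h0 : mono F W (List.ofFn U) = 0 := mono_zero F W hU
  have := expansion_coeff hW' g c hg U V hV
  rw [h0, map_zero, map_zero] at this
  exact this.symm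

end Expansion

/-- Let `w, w'` be uniformly recurrent right-infinite words over
`{x_1,…,x_n}` in which every letter occurs, with associated projectively simple
monomial algebras `A = A_w`, `B = A_{w'}`.  Then every graded `F`-algebra
isomorphism `f : A → B` is given by a permutation and scaling of the generators:
`f(x_i) = λ_i x_{σ(i)}` with `λ_i ∈ F^×` and `σ ∈ S_n`. -/
theorem statement13 (F : Type) [Field F] (n : ℕ) (w w' : ℕ → Fin n)
    (hur : UniformlyRecurrent w) (hur' : UniformlyRecurrent w')
    (hall : ∀ j : Fin n, ∃ i : ℕ, w i = j) (hall' : ∀ j : Fin n, ∃ i : ℕ, w' i = j)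
    (f : MonAlg F ((factorsOf w)ᶜ) ≃ₐ[F] MonAlg F ((factorsOf w')ᶜ))
    (hgraded : ∀ d : ℕ, ∀ a ∈ homog F ((factorsOf w)ᶜ) d,
        f a ∈ homog F ((factorsOf w')ᶜ) d) :
    ∃ (lam : Fin n → F) (σ : Equiv.Perm (Fin n)), (∀ i, lam i ≠ 0) ∧
      ∀ i : Fin n, f (mono F ((factorsOf w)ᶜ) [i]) =
        lam i • mono F ((factorsOf w')ᶜ) [σ i] := by
  classical
  have hWA : ExtClosed ((factorsOf w)ᶜ) := extClosed_compl_factors w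
  have hWB : ExtClosed ((factorsOf w')ᶜ) := extClosed_compl_factors w'
  set X : Fin n → MonAlg F ((factorsOf w)ᶜ) := fun i => mono F ((factorsOf w)ᶜ) [i] with hX
  set Y : Fin n → MonAlg F ((factorsOf w')ᶜ) := fun j => mono F ((factorsOf w')ᶜ) [j] with hY
  have hXW : ∀ i : Fin n, [i] ∉ (factorsOf w)ᶜ := fun i hi =>
    hi (singleton_mem_factorsOf (hall i))
  have hYW : ∀ j : Fin n, [j] ∉ (factorsOf w')ᶜ := fun j hj =>
    hj (singleton_mem_factorsOf (hall' j))
  -- coefficient extraction helpers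
  have epsXsum : ∀ (t : Fin n → F) (i' : Fin n),
      eps hWA (hXW i') (∑ i, t i • X i) = t i' := by
    intro t i'
    rw [map_sum]
    rw [Finset.sum_congr rfl fun i (_ : i ∈ Finset.univ) => by
      rw [map_smul, eps_mono hWA (hXW i'), smul_eq_mul]]
    have : ∀ i : Fin n, ([i] = [i']) = (i = i') := by
      intro i; simp
    simp only [this]
    simp [Finset.sum_ite_eq']
  have epsYsum : ∀ (t : Fin n → F) (j' : Fin n),
      eps hWB (hYW j') (∑ j, t j • Y j) = t j' := by
    intro t j'
    rw [map_sum]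
    rw [Finset.sum_congr rfl fun j (_ : j ∈ Finset.univ) => by
      rw [map_smul, eps_mono hWB (hYW j'), smul_eq_mul]]
    have : ∀ j : Fin n, ([j] = [j']) = (j = j') := by
      intro j; simp
    simp only [this]
    simp [Finset.sum_ite_eq']
  -- Step A : the matrix of f in degree 1
  have hspan : ∀ i, f (X i) ∈ Submodule.span F (Set.range Y) := by
    intro i
    have h1 : f (X i) ∈ homog F ((factorsOf w')ᶜ) 1 :=
      hgraded 1 _ (Submodule.subset_span ⟨[i], rfl, rfl⟩)
    have hset : { a | ∃ u : List (Fin n), u.length = 1 ∧ a = mono F ((factorsOf w')ᶜ) u }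
        = Set.range Y := by
      ext a
      constructor
      · rintro ⟨u, hu, rfl⟩
        obtain ⟨j, rfl⟩ := List.length_eq_one_iff.mp hu
        exact ⟨j, rfl⟩
      · rintro ⟨j, rfl⟩
        exact ⟨[j], rfl, rfl⟩
    rwa [homog, hset] at h1
  choose c hc using fun i => (Submodule.mem_span_range_iff_exists_fun F).mp (hspan i)
  -- Step C : invertibility of the matrix c
  have hinj : ∀ t : Fin n → F, (∀ j, ∑ i, t i * c i j = 0) → t = 0 := by
    intro t ht
    have h1 : f (∑ i, t i • X i) = 0 := by
      rw [map_sum]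
      rw [Finset.sum_congr rfl fun i (_ : i ∈ Finset.univ) => by
        rw [map_smul (f : MonAlg F ((factorsOf w)ᶜ) ≃ₐ[F] MonAlg F ((factorsOf w')ᶜ)), ← hc i,
          Finset.smul_sum]]
      have h2 : ∀ i j : Fin n, t i • (c i j • Y j) = (t i * c i j) • Y j := by
        intro i j; rw [smul_smul]
      simp only [h2]
      rw [Finset.sum_comm]
      have h3 : ∀ j : Fin n, ∑ i, (t i * c i j) • Y j = (∑ i, t i * c i j) • Y j := by
        intro j; rw [Finset.sum_smul]
      simp only [h3]
      simp only [ht, zero_smul, Finset.sum_const_zero]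
    have h2 : (∑ i, t i • X i) = 0 := by
      apply f.injective
      rw [h1, map_zero]
    funext i0
    have := epsXsum t i0
    rw [h2, map_zero] at this
    exact this.symm
  -- the inverse matrix c'
  have hφ : ∃ c' : Fin n → Fin n → F, ∀ j k : Fin n,
      ∑ i, c' j i * c i k = if j = k then 1 else 0 := by
    let φ : (Fin n → F) →ₗ[F] (Fin n → F) :=
      { toFun := fun t => fun j => ∑ i, t i * c i j
        map_add' := by
          intro a b; funext j; simp [add_mul, Finset.sum_add_distrib]
        map_smul' := by
          intro r a; funext j; simp [Finset.mul_sum, mul_assoc] }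
    have φinj : Function.Injective φ := by
      intro a b hab
      have h0 : a - b = 0 := by
        apply hinj
        intro j
        have : φ a j = φ b j := by rw [hab]
        simp only [φ, LinearMap.coe_mk, AddHom.coe_mk] at this
        simp [sub_mul, Finset.sum_sub_distrib, this]
      exact sub_eq_zero.mp h0
    have φsurj : Function.Surjective φ := LinearMap.injective_iff_surjective.mp φinj
    choose s hs using fun j => φsurj (Pi.single j (1 : F))
    refine ⟨fun j i => s j i, fun j k => ?_⟩
    have := congrFun (hs j) k
    simp only [φ, LinearMap.coe_mk, AddHom.coe_mk] at this
    rw [this, Pi.single_apply]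
    by_cases h : j = k <;> simp [h, eq_comm]
  obtain ⟨c', H3⟩ := hφ
  have H4 : ∀ i k : Fin n, ∑ j, c i j * c' j k = if i = k then 1 else 0 := by
    let M : Matrix (Fin n) (Fin n) F := Matrix.of fun i j => c i j
    let N : Matrix (Fin n) (Fin n) F := Matrix.of fun j i => c' j i
    have hNM : N * M = 1 := by
      ext j k
      simp only [Matrix.mul_apply, Matrix.one_apply, M, N, Matrix.of_apply]
      rw [H3 j k]
    have hMN : M * N = 1 := mul_eq_one_comm.mp hNM
    intro i k
    have := congrFun (congrFun hMN i) k
    simp only [Matrix.mul_apply, Matrix.one_apply, M, N, Matrix.of_apply] at this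
    rw [this]
  -- Step D : the matrix of f.symm
  have hsymm : ∀ j, f.symm (Y j) = ∑ i, c' j i • X i := by
    intro j
    have h1 : f (∑ i, c' j i • X i) = Y j := by
      rw [map_sum]
      rw [Finset.sum_congr rfl fun i (_ : i ∈ Finset.univ) => by
        rw [map_smul (f : MonAlg F ((factorsOf w)ᶜ) ≃ₐ[F] MonAlg F ((factorsOf w')ᶜ)), ← hc i,
          Finset.smul_sum]]
      have h2 : ∀ i k : Fin n, c' j i • (c i k • Y k) = (c' j i * c i k) • Y k := by
        intro i k; rw [smul_smul]
      simp only [h2]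
      rw [Finset.sum_comm]
      have h3 : ∀ k : Fin n, ∑ i, (c' j i * c i k) • Y k = (∑ i, c' j i * c i k) • Y k := by
        intro k; rw [Finset.sum_smul]
      simp only [h3]
      simp only [H3]
      simp [Finset.sum_ite_eq']
    rw [← h1, AlgEquiv.symm_apply_apply]
  -- Step E : the vanishing conditions
  have H1 : ∀ (d : ℕ) (U V : Fin d → Fin n), List.ofFn U ∉ factorsOf w →
      List.ofFn V ∈ factorsOf w' → ∏ k, c (U k) (V k) = 0 := by
    intro d U V hU hV
    exact vanish hWB f.toAlgHom c (fun i => (hc i).symm) U V hU (fun h => h hV)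
  have H2 : ∀ (d : ℕ) (U V : Fin d → Fin n), List.ofFn U ∈ factorsOf w →
      List.ofFn V ∉ factorsOf w' → ∏ k, c' (V k) (U k) = 0 := by
    intro d U V hU hV
    exact vanish hWA f.symm.toAlgHom c' (fun j => hsymm j) V U hV (fun h => h hU)
  -- Step F : combinatorics
  have hB : ∀ (d : ℕ) (U V : Fin d → Fin n), List.ofFn V ∈ factorsOf w' →
      (∀ k, c (U k) (V k) ≠ 0) → List.ofFn U ∈ factorsOf w := by
    intro d U V hV hne
    by_contra hU
    exact Finset.prod_ne_zero_iff.mpr (fun k _ => hne k) (H1 d U V hU hV)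
  have hB' : ∀ (d : ℕ) (U V : Fin d → Fin n), List.ofFn U ∈ factorsOf w →
      (∀ k, c' (V k) (U k) ≠ 0) → List.ofFn V ∈ factorsOf w' := by
    intro d U V hU hne
    by_contra hV
    exact Finset.prod_ne_zero_iff.mpr (fun k _ => hne k) (H2 d U V hU hV)
  have hdiagB : ∀ j : Fin n, ∃ i, c i j ≠ 0 ∧ c' j i ≠ 0 := by
    intro j
    have h1 : (∑ i, c' j i * c i j) ≠ 0 := by rw [H3 j j]; simp
    obtain ⟨i, _, hi⟩ := Finset.exists_ne_zero_of_sum_ne_zero h1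
    exact ⟨i, (mul_ne_zero_iff.mp hi).2, (mul_ne_zero_iff.mp hi).1⟩
  have hdiagA : ∀ i : Fin n, ∃ j, c i j ≠ 0 ∧ c' j i ≠ 0 := by
    intro i
    have h1 : (∑ j, c i j * c' j i) ≠ 0 := by rw [H4 i i]; simp
    obtain ⟨j, _, hj⟩ := Finset.exists_ne_zero_of_sum_ne_zero h1
    exact ⟨j, (mul_ne_zero_iff.mp hj).1, (mul_ne_zero_iff.mp hj).2⟩
  have hsub : ∀ (d : ℕ) (V V' : Fin d → Fin n), List.ofFn V ∈ factorsOf w' →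
      (∀ k, ∃ i, c i (V k) ≠ 0 ∧ c' (V' k) i ≠ 0) → List.ofFn V' ∈ factorsOf w' := by
    intro d V V' hV h
    choose U hU1 hU2 using h
    exact hB' d U V' (hB d U V hV hU1) hU2
  have hR : ∀ (j j' i0 : Fin n), c i0 j ≠ 0 → c' j' i0 ≠ 0 → j' = j := by
    intro j j' i0 h1 h2
    by_contra hne
    obtain ⟨C, hC⟩ := hur' [j] (singleton_mem_factorsOf (hall' j))
    set V : Fin C → Fin n := fun k => w' (0 + (k : ℕ)) with hV
    have hVmem : List.ofFn V ∈ factorsOf w' := by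
      rw [mem_factorsOf_iff]
      refine ⟨0, fun k hk => ?_⟩
      rw [List.getElem_ofFn]
    set V' : Fin C → Fin n := fun k => if V k = j then j' else V k with hV'
    have hV'mem : List.ofFn V' ∈ factorsOf w' := by
      apply hsub C V V' hVmem
      intro k
      by_cases h : V k = j
      · refine ⟨i0, ?_, ?_⟩
        · rw [h]; exact h1
        · simp only [hV', h, if_pos rfl]
          exact h2
      · obtain ⟨i, hi1, hi2⟩ := hdiagB (V k)
        refine ⟨i, hi1, ?_⟩
        simp only [hV', if_neg h]
        exact hi2
    have hj : [j] <:+: List.ofFn V' := hC _ hV'mem (by simp)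
    have hjm : j ∈ List.ofFn V' := hj.subset (List.mem_singleton_self j)
    rw [List.mem_ofFn] at hjm
    obtain ⟨k, hk⟩ := hjm
    by_cases h : V k = j
    · rw [show V' k = j' from by simp only [hV', if_pos h]] at hk
      exact hne hk
    · rw [show V' k = V k from by simp only [hV', if_neg h]] at hk
      exact h hk
  choose τ hτ1 hτ2 using hdiagA
  have hc'0 : ∀ j i : Fin n, c' j i ≠ 0 → j = τ i := fun j i h => hR (τ i) j i (hτ1 i) h
  have hcoff : ∀ i i' : Fin n, i ≠ i' → c i (τ i') = 0 := by
    intro i i' hne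
    have h4 := H4 i i'
    rw [if_neg hne] at h4
    have hcollapse : ∑ j, c i j * c' j i' = c i (τ i') * c' (τ i') i' := by
      apply Finset.sum_eq_single (τ i')
      · intro j _ hj
        have hz : c' j i' = 0 := by
          by_contra hh
          exact hj (hc'0 j i' hh)
        rw [hz, mul_zero]
      · simp
    rw [hcollapse] at h4
    exact (mul_eq_zero.mp h4).resolve_right (hτ2 i')
  have τinj : Function.Injective τ := by
    intro a b hab
    by_contra hne
    have := hcoff a b hne
    rw [← hab] at this
    exact hτ1 a this
  have τbij : Function.Bijective τ := Finite.injective_iff_bijective.mp τinj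
  refine ⟨fun i => c i (τ i), Equiv.ofBijective τ τbij, fun i => hτ1 i, ?_⟩
  intro i
  rw [← hc i]
  have hσ : (Equiv.ofBijective τ τbij) i = τ i := rfl
  rw [hσ]
  rw [Finset.sum_eq_single (τ i)]
  · intro j _ hj
    obtain ⟨i', rfl⟩ := τbij.2 j
    rw [hcoff i i' (fun h => hj (by rw [h])), zero_smul]
  · simp
end
end

section
/- Let A = F⟨x_1, …, x_m⟩/⟨w_1, …, w_r⟩ be a finitely presented monomial algebra over a field F, and let d ≥ 2 be an upper bound for the lengths of w_1, …, w_r. Then pro(A) is finitely generated as a left ideal: pro(A) is generated as a left ideal by the (finitely many) monomials of length at most d that lie in pro(A); in particular pro(A) ∩ A_{≥d} = A · (pro(A) ∩ A_d). -/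
noncomputable section

open scoped BigOperators

variable (F : Type) [Field F] {m : ℕ}

/-- The right prolongable radical of a graded algebra `A` with grading `𝒜`:
the set of `f ∈ A` with `f · A_d = 0` for some `d ≥ 1`. -/
def proSet (A : Type) [Ring A] [Algebra F A] (𝒜 : ℕ → Submodule F A) : Set A :=
  { f | ∃ d : ℕ, 1 ≤ d ∧ ∀ g ∈ 𝒜 d, f * g = 0 }

/-- The left prolongable radical of a graded algebra `A` with grading `𝒜`:
the set of `f ∈ A` with `A_d · f = 0` for some `d ≥ 1`. -/
def proSetLeft (A : Type) [Ring A] [Algebra F A] (𝒜 : ℕ → Submodule F A) : Set A :=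
  { f | ∃ d : ℕ, 1 ≤ d ∧ ∀ g ∈ 𝒜 d, g * f = 0 }

/-- A monomial algebra is (right) prolongable if every nonzero monomial has a
nonzero proper right prolongation. -/
def Prolongable (W : Set (List (Fin m))) : Prop :=
  ∀ u : List (Fin m), mono F W u ≠ 0 → ∃ v : List (Fin m), v ≠ [] ∧ mono F W (u ++ v) ≠ 0


set_option linter.unnecessarySimpa false
set_option linter.unusedVariables false

namespace S15

variable {F}

lemma wordElem_mul (u v : List (Fin m)) :
    wordElem F u * wordElem F v = wordElem F (u ++ v) := by
  simp [wordElem, ← map_mul, FreeMonoid.ofList_append]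

lemma wordElem_eq_single (u : List (Fin m)) :
    wordElem F u = MonoidAlgebra.single (FreeMonoid.ofList u) 1 := rfl

lemma mem_of_forall_word (x : FreeAlg F m) (p : Submodule F (FreeAlg F m))
    (h : ∀ u : List (Fin m), wordElem F u ∈ p) : x ∈ p := by
  induction x using MonoidAlgebra.induction with
  | zero => exact p.zero_mem
  | single_add w b f _ _ ih =>
    refine p.add_mem ?_ ih
    have : (MonoidAlgebra.single w b : FreeAlg F m) = b • wordElem F (FreeMonoid.toList w) := by
      rw [wordElem_eq_single, FreeMonoid.ofList_toList, MonoidAlgebra.smul_single', mul_one]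
    rw [this]
    exact p.smul_mem _ (h _)

/-- A word is bad if it contains a forbidden factor. -/
def Bad (V : Set (List (Fin m))) (u : List (Fin m)) : Prop :=
  ∃ w ∈ V, w <:+: u

variable (V : Set (List (Fin m)))

lemma Bad.append_left {V} {u : List (Fin m)} (h : Bad V u) (x : List (Fin m)) :
    Bad V (x ++ u) := by
  obtain ⟨w, hw, hinf⟩ := h
  exact ⟨w, hw, hinf.trans (List.suffix_append x u).isInfix⟩

lemma Bad.append_right {V} {u : List (Fin m)} (h : Bad V u) (y : List (Fin m)) :
    Bad V (u ++ y) := by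
  obtain ⟨w, hw, hinf⟩ := h
  exact ⟨w, hw, hinf.trans (List.prefix_append u y).isInfix⟩

lemma Bad.of_infix {V} {u u' : List (Fin m)} (h : Bad V u) (hinf : u <:+: u') : Bad V u' := by
  obtain ⟨w, hw, h1⟩ := h
  exact ⟨w, hw, h1.trans hinf⟩

/-- The span of the bad words in the free algebra. -/
def J (F : Type) [Field F] (V : Set (List (Fin m))) : Submodule F (FreeAlg F m) :=
  Submodule.span F {a | ∃ u, Bad V u ∧ a = wordElem F u}

lemma mul_mem_J_left (x : FreeAlg F m) {y : FreeAlg F m} (hy : y ∈ J F V) :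
    x * y ∈ J F V := by
  induction hy using Submodule.span_induction with
  | mem a ha =>
    obtain ⟨u, hu, rfl⟩ := ha
    refine mem_of_forall_word x ((J F V).comap (LinearMap.mulRight F (wordElem F u))) ?_
    intro w
    simp only [Submodule.mem_comap, LinearMap.mulRight_apply]
    rw [wordElem_mul]
    exact Submodule.subset_span ⟨w ++ u, hu.append_left w, rfl⟩
  | zero => simpa using (J F V).zero_mem
  | add a b _ _ ha hb => rw [mul_add]; exact (J F V).add_mem ha hb
  | smul c a _ ha => rw [mul_smul_comm]; exact (J F V).smul_mem c ha

lemma mul_mem_J_right {x : FreeAlg F m} (hx : x ∈ J F V) (y : FreeAlg F m) :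
    x * y ∈ J F V := by
  induction hx using Submodule.span_induction with
  | mem a ha =>
    obtain ⟨u, hu, rfl⟩ := ha
    refine mem_of_forall_word y ((J F V).comap (LinearMap.mulLeft F (wordElem F u))) ?_
    intro w
    simp only [Submodule.mem_comap, LinearMap.mulLeft_apply]
    rw [wordElem_mul]
    exact Submodule.subset_span ⟨u ++ w, hu.append_right w, rfl⟩
  | zero => simpa using (J F V).zero_mem
  | add a b _ _ ha hb => rw [add_mul]; exact (J F V).add_mem ha hb
  | smul c a _ ha => rw [smul_mul_assoc]; exact (J F V).smul_mem c ha

/-- `J` as a two-sided ideal. -/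
def Jt (F : Type) [Field F] (V : Set (List (Fin m))) : TwoSidedIdeal (FreeAlg F m) :=
  TwoSidedIdeal.mk' (J F V : Set (FreeAlg F m)) (J F V).zero_mem
    (fun hx hy => (J F V).add_mem hx hy) (fun hx => (J F V).neg_mem hx)
    (fun hy => mul_mem_J_left V _ hy) (fun hx => mul_mem_J_right V hx _)

/-- Key lemma: the kernel of the projection is contained in `J`. -/
lemma mem_J_of_pi_eq_zero {a : FreeAlg F m} (ha : monAlgPi F V a = 0) : a ∈ J F V := by
  set c := (Jt F V).ringCon with hc
  have hrel : ∀ x y, monRel F V x y → RingCon.mk' c x = RingCon.mk' c y := by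
    rintro x y ⟨⟨u, hu, rfl⟩, rfl⟩
    have : c (wordElem F u) 0 := by
      rw [hc, (Jt F V).rel_iff, sub_zero, Jt, TwoSidedIdeal.mem_mk']
      exact Submodule.subset_span ⟨u, ⟨u, hu, List.infix_refl u⟩, rfl⟩
    exact (RingCon.eq c).mpr this
  have h0 : RingQuot.mkRingHom (monRel F V) a = 0 := by
    have : (monAlgPi F V a : MonAlg F V) = RingQuot.mkRingHom (monRel F V) a := by
      rw [monAlgPi, ← RingQuot.mkAlgHom_coe F]
      rfl
    rw [← this, ha]
  have := congrArg (RingQuot.lift ⟨RingCon.mk' c, hrel⟩) h0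
  rw [RingQuot.lift_mkRingHom_apply, map_zero] at this
  have hmem : a ∈ Jt F V := by
    rw [TwoSidedIdeal.mem_iff]
    exact (RingCon.eq c).mp (by
      show RingCon.mk' c a = RingCon.mk' c 0
      rw [this, map_zero])
  rwa [Jt, TwoSidedIdeal.mem_mk'] at hmem

end S15

namespace S15

open FreeMonoid

variable {F : Type} [Field F] {m : ℕ} (V : Set (List (Fin m)))

/-- Combinatorial key lemma: a bad factor of `u ++ v` that does not occur in `u`
already occurs in `s ++ v`, where `s` is a sufficiently long suffix of `u`. -/
lemma bad_suffix {V : Set (List (Fin m))} {u v s : List (Fin m)} {d : ℕ}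
    (hlen : ∀ w ∈ V, w.length ≤ d) (hs : s <:+ u) (hsd : d ≤ s.length + 1)
    (hu : ¬ Bad V u) (hbad : Bad V (u ++ v)) : Bad V (s ++ v) := by
  obtain ⟨w, hwV, x, y, hxy⟩ := hbad
  -- x ++ (w ++ y) = u ++ v
  rw [List.append_assoc] at hxy
  rcases List.append_eq_append_iff.mp hxy with ⟨a, ha, hwy⟩ | ⟨c, hx, hv⟩
  · -- u = x ++ a, w ++ y = a ++ v
    rcases List.append_eq_append_iff.mp hwy with ⟨b, hab, hy⟩ | ⟨b, hw, hv⟩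
    · -- a = w ++ b : w is an infix of u
      exact absurd ⟨w, hwV, x, b, by rw [List.append_assoc, ← hab, ← ha]⟩ hu
    · -- w = a ++ b, v = b ++ y
      rcases b with _ | ⟨b0, b⟩
      · -- b = [] : w = a is a suffix of u, infix of u
        exact absurd ⟨w, hwV, x, [], by
          simp only [List.append_nil]
          rw [hw, List.append_nil] at *
          rw [← ha]⟩ hu
      · -- b nonempty : a is short suffix of u
        have hau : a <:+ u := ⟨x, ha.symm⟩
        have hasuf : a <:+ s := by
          apply List.suffix_of_suffix_length_le hau hs
          have hwl : w.length ≤ d := hlen w hwV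
          have : w.length = a.length + (b0 :: b).length := by rw [hw, List.length_append]
          have hb : 1 ≤ (b0 :: b).length := by simp
          omega
        obtain ⟨t, ht⟩ := hasuf
        exact ⟨w, hwV, t, y, by rw [hw, hv, ← ht]; simp [List.append_assoc]⟩
  · -- x = u ++ c, v = c ++ (w ++ y) : w is an infix of v, hence of s ++ v
    exact ⟨w, hwV, s ++ c, y, by rw [hv]; simp [List.append_assoc]⟩

/-- Bad words map to zero. -/
lemma mono_eq_zero_of_bad {u : List (Fin m)} (h : Bad V u) : mono F V u = 0 := by
  obtain ⟨w, hw, x, y, hxy⟩ := h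
  have hrel : monAlgPi F V (wordElem F w) = 0 := by
    have := RingQuot.mkAlgHom_rel F (s := monRel F V) (x := wordElem F w) (y := 0)
      ⟨⟨w, hw, rfl⟩, rfl⟩
    rw [monAlgPi, this, map_zero]
  have : mono F V u = mono F V x * monAlgPi F V (wordElem F w) * mono F V y := by
    rw [mono, mono, mono, ← map_mul, ← map_mul, wordElem_mul, wordElem_mul, hxy]
  rw [this, hrel, mul_zero, zero_mul]

lemma mono_append (u v : List (Fin m)) :
    mono F V (u ++ v) = mono F V u * mono F V v := by
  rw [mono, mono, mono, ← map_mul, wordElem_mul]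

/-- If `a` is supported on bad words then its image is zero. -/
lemma pi_eq_zero_of_bad_support {a : FreeAlg F m}
    (h : ∀ w ∈ a.coeff.support, Bad V (toList w)) : monAlgPi F V a = 0 := by
  have hmem : a ∈ MonoidAlgebra.supported F F {w : FreeMonoid (Fin m) | Bad V (toList w)} :=
    MonoidAlgebra.mem_supported.mpr (fun w hw => h w hw)
  rw [MonoidAlgebra.supported_eq_span_single] at hmem
  clear h
  induction hmem using Submodule.span_induction with
  | mem x hx =>
    obtain ⟨w, hw, rfl⟩ := hx
    show monAlgPi F V (MonoidAlgebra.single w 1) = 0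
    have : (MonoidAlgebra.single w 1 : FreeAlg F m) = wordElem F (toList w) := by
      rw [wordElem_eq_single, ofList_toList]
    rw [this]
    exact mono_eq_zero_of_bad V hw
  | zero => exact map_zero _
  | add x y _ _ hx hy => rw [map_add, hx, hy, add_zero]
  | smul c x _ hx => rw [map_smul, hx, smul_zero]

/-- Elements of `J` are supported on bad words. -/
lemma bad_support_of_mem_J {a : FreeAlg F m} (ha : a ∈ J F V) :
    ∀ w ∈ a.coeff.support, Bad V (toList w) := by
  have : J F V ≤ MonoidAlgebra.supported F F {w : FreeMonoid (Fin m) | Bad V (toList w)} := by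
    rw [J, Submodule.span_le]
    rintro x ⟨u, hu, rfl⟩
    rw [wordElem_eq_single]
    exact MonoidAlgebra.mem_supported.mpr ((Finsupp.mem_supported F _).mp
      (Finsupp.single_mem_supported F 1 (by simpa [toList_ofList] using hu)))
  exact fun w hw => MonoidAlgebra.mem_supported.mp (this ha) hw

/-- Coefficient extraction. -/
lemma coeff_mul_word (a : FreeAlg F m) (u v : List (Fin m)) :
    (a * wordElem F v).coeff (ofList (u ++ v)) = a.coeff (ofList u) := by
  rw [show wordElem F v = MonoidAlgebra.single (ofList v) 1 from rfl]
  rw [MonoidAlgebra.coeff_mul_single_eq_coeff_mul (m₂ := ofList u)]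
  · rw [mul_one]
  · intro b _
    constructor
    · intro h
      have h2 := congrArg toList h
      simp only [toList_mul, toList_ofList] at h2
      apply toList.injective
      simpa using List.append_cancel_right h2
    · rintro rfl
      rfl

/-- The key vanishing lemma for coefficients. -/
lemma coeff_eq_zero {b : FreeAlg F m} {v : List (Fin m)} {w : FreeMonoid (Fin m)}
    (h : monAlgPi F V b * mono F V v = 0) (hgood : ¬ Bad V (toList w ++ v)) :
    b.coeff w = 0 := by
  have h1 : monAlgPi F V (b * wordElem F v) = 0 := by
    rw [map_mul]; exact h
  have h2 := mem_J_of_pi_eq_zero V h1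
  have h3 := bad_support_of_mem_J V h2
  by_contra hb
  have hcoeff : (b * wordElem F v).coeff (ofList (toList w ++ v)) ≠ 0 := by
    rw [coeff_mul_word, ofList_toList]; exact hb
  have h4 := h3 (ofList (toList w ++ v)) (Finsupp.mem_support_iff.mpr hcoeff)
  rw [toList_ofList] at h4
  exact hgood h4

end S15

namespace S15

open FreeMonoid

variable {F : Type} [Field F] {m : ℕ} (V : Set (List (Fin m)))

lemma mono_mem_homog {u : List (Fin m)} {d : ℕ} (h : u.length = d) :
    mono F V u ∈ homog F V d :=
  Submodule.subset_span ⟨u, h, rfl⟩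

/-- Express the image of `b` as a sum of monomials. -/
lemma pi_sum (b : FreeAlg F m) :
    monAlgPi F V b = b.coeff.sum fun w r => r • mono F V (toList w) := by
  conv_lhs => rw [← MonoidAlgebra.sum_coeff_single b]
  rw [map_finsuppSum]
  refine Finsupp.sum_congr fun w _ => ?_
  have : (MonoidAlgebra.single w (b.coeff w) : FreeAlg F m) = (b.coeff w) • wordElem F (toList w) := by
    rw [wordElem_eq_single, ofList_toList, MonoidAlgebra.smul_single', mul_one]
  rw [this, map_smul]
  rfl

/-- If a monomial kills all good extensions of a given length, it kills the whole
homogeneous component. -/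
lemma mono_mul_homog_zero {u : List (Fin m)} {d' : ℕ}
    (h : ∀ v : List (Fin m), v.length = d' → ¬ Bad V v → Bad V (u ++ v)) :
    ∀ g ∈ homog F V d', mono F V u * g = 0 := by
  intro g hg
  induction hg using Submodule.span_induction with
  | mem a ha =>
    obtain ⟨v, hv, rfl⟩ := ha
    by_cases hbv : Bad V v
    · rw [mono_eq_zero_of_bad V hbv, mul_zero]
    · rw [← mono_append, mono_eq_zero_of_bad V (h v hv hbv)]
  | zero => rw [mul_zero]
  | add a b _ _ ha hb => rw [mul_add, ha, hb, add_zero]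
  | smul c a _ ha => rw [mul_smul_comm, ha, smul_zero]

/-- Annihilating degree `d'` implies annihilating every degree `e ≥ d'`. -/
lemma annihilate_raise {f : MonAlg F V} {d' e : ℕ}
    (h : ∀ g ∈ homog F V d', f * g = 0) (hde : d' ≤ e) :
    ∀ g ∈ homog F V e, f * g = 0 := by
  intro g hg
  induction hg using Submodule.span_induction with
  | mem a ha =>
    obtain ⟨v, hv, rfl⟩ := ha
    have hsplit : v = v.take d' ++ v.drop d' := (List.take_append_drop d' v).symm
    rw [hsplit, mono_append, ← mul_assoc,
      h _ (mono_mem_homog V (by rw [List.length_take]; omega)), zero_mul]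
  | zero => rw [mul_zero]
  | add a b _ _ ha hb => rw [mul_add, ha, hb, add_zero]
  | smul c a _ ha => rw [mul_smul_comm, ha, smul_zero]

/-- `proSet` as a left ideal. -/
def proIdeal : Ideal (MonAlg F V) where
  carrier := proSet F (MonAlg F V) (homog F V)
  zero_mem' := ⟨1, le_refl 1, fun g _ => zero_mul g⟩
  add_mem' := by
    rintro x y ⟨d₁, hd₁, hx⟩ ⟨d₂, hd₂, hy⟩
    refine ⟨max d₁ d₂, le_trans hd₁ (le_max_left _ _), fun g hg => ?_⟩
    rw [add_mul, annihilate_raise V hx (le_max_left _ _) g hg,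
      annihilate_raise V hy (le_max_right _ _) g hg, add_zero]
  smul_mem' := by
    rintro c x ⟨d', hd', hx⟩
    refine ⟨d', hd', fun g hg => ?_⟩
    rw [smul_eq_mul, mul_assoc, hx g hg, mul_zero]

lemma mem_proSet_iff (f : MonAlg F V) :
    f ∈ proSet F (MonAlg F V) (homog F V) ↔ f ∈ proIdeal V := Iff.rfl

end S15

namespace S15

open FreeMonoid

variable {F : Type} [Field F] {m : ℕ} (V : Set (List (Fin m)))

lemma suffix_package {d : ℕ} (hlenV : ∀ w ∈ V, w.length ≤ d) {u : List (Fin m)} {d' : ℕ}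
    (hu : ¬ Bad V u)
    (hann : ∀ v : List (Fin m), v.length = d' → ¬ Bad V v → Bad V (u ++ v))
    (hdu : d ≤ u.length) :
    ∃ p s : List (Fin m), u = p ++ s ∧ s.length = d ∧ ¬ Bad V s ∧
      (∀ v : List (Fin m), v.length = d' → ¬ Bad V v → Bad V (s ++ v)) := by
  refine ⟨u.take (u.length - d), u.drop (u.length - d),
    (List.take_append_drop _ u).symm, ?_, ?_, ?_⟩
  · rw [List.length_drop]; omega
  · intro hb
    exact hu (hb.of_infix (List.drop_suffix _ u).isInfix)
  · intro v hv hgv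
    refine bad_suffix hlenV (List.drop_suffix _ u) ?_ hu (hann v hv hgv)
    rw [List.length_drop]; omega

lemma gen_short {d : ℕ} (hlenV : ∀ w ∈ V, w.length ≤ d) {u : List (Fin m)}
    (hu : ¬ Bad V u) {d' : ℕ} (hd' : 1 ≤ d')
    (hann : ∀ v : List (Fin m), v.length = d' → ¬ Bad V v → Bad V (u ++ v)) :
    mono F V u ∈ Ideal.span { a : MonAlg F V |
      a ∈ proSet F (MonAlg F V) (homog F V) ∧
        ∃ u' : List (Fin m), u'.length ≤ d ∧ a = mono F V u' } := by
  by_cases hlu : u.length ≤ d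
  · exact Ideal.subset_span ⟨⟨d', hd', mono_mul_homog_zero V hann⟩, u, hlu, rfl⟩
  · obtain ⟨p, s, hps, hsd, hgs, hanns⟩ :=
      suffix_package V hlenV hu hann (le_of_lt (lt_of_not_ge hlu))
    have hmu : mono F V u = mono F V p * mono F V s := by
      rw [← mono_append, ← hps]
    rw [hmu]
    exact Ideal.mul_mem_left _ _ (Ideal.subset_span
      ⟨⟨d', hd', mono_mul_homog_zero V hanns⟩, s, le_of_eq hsd, rfl⟩)

lemma gen_high {d : ℕ} (hlenV : ∀ w ∈ V, w.length ≤ d) {u : List (Fin m)}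
    (hu : ¬ Bad V u) {d' : ℕ} (hd' : 1 ≤ d')
    (hann : ∀ v : List (Fin m), v.length = d' → ¬ Bad V v → Bad V (u ++ v))
    (hdu : d ≤ u.length) :
    mono F V u ∈ Ideal.span
      (proSet F (MonAlg F V) (homog F V) ∩ ↑(homog F V d)) := by
  obtain ⟨p, s, hps, hsd, hgs, hanns⟩ := suffix_package V hlenV hu hann hdu
  have hmu : mono F V u = mono F V p * mono F V s := by
    rw [← mono_append, ← hps]
  rw [hmu]
  exact Ideal.mul_mem_left _ _ (Ideal.subset_span
    ⟨⟨d', hd', mono_mul_homog_zero V hanns⟩, mono_mem_homog V hsd⟩)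

lemma exists_rep {Q : FreeMonoid (Fin m) → Prop} {f : MonAlg F V}
    (hf : f ∈ Submodule.span F { a : MonAlg F V | ∃ u, Q (ofList u) ∧ a = mono F V u }) :
    ∃ b : FreeAlg F m, monAlgPi F V b = f ∧ ∀ w ∈ b.coeff.support, Q w := by
  have hle : Submodule.span F { a : MonAlg F V | ∃ u, Q (ofList u) ∧ a = mono F V u } ≤
      Submodule.map (monAlgPi F V).toLinearMap (MonoidAlgebra.supported F F {w | Q w}) := by
    rw [Submodule.span_le]
    rintro x ⟨u, hu, rfl⟩
    exact ⟨wordElem F u,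
      by rw [wordElem_eq_single]; exact MonoidAlgebra.mem_supported.mpr
          ((Finsupp.mem_supported F _).mp (Finsupp.single_mem_supported F 1 hu)), rfl⟩
  obtain ⟨b, hb, hbf⟩ := hle hf
  exact ⟨b, hbf, fun w hw => MonoidAlgebra.mem_supported.mp hb hw⟩

lemma good_rep {Q : FreeMonoid (Fin m) → Prop} {f : MonAlg F V} (b : FreeAlg F m)
    (hb : monAlgPi F V b = f) (hQ : ∀ w ∈ b.coeff.support, Q w) :
    ∃ b' : FreeAlg F m, monAlgPi F V b' = f ∧
      ∀ w ∈ b'.coeff.support, Q w ∧ ¬ Bad V (toList w) := by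
  classical
  refine ⟨MonoidAlgebra.ofCoeff (b.coeff.filter (fun w => ¬ Bad V (toList w))), ?_, ?_⟩
  · have hsplit := Finsupp.filter_pos_add_filter_neg b.coeff (fun w => ¬ Bad V (toList w))
    have hzero : monAlgPi F V (MonoidAlgebra.ofCoeff
        (b.coeff.filter (fun w => ¬¬ Bad V (toList w)))) = 0 := by
      apply pi_eq_zero_of_bad_support
      intro w hw
      rw [MonoidAlgebra.coeff_ofCoeff, Finsupp.support_filter, Finset.mem_filter] at hw
      exact not_not.mp hw.2
    have : monAlgPi F V (MonoidAlgebra.ofCoeff (b.coeff.filter (fun w => ¬ Bad V (toList w)))) =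
        monAlgPi F V (MonoidAlgebra.ofCoeff (b.coeff.filter (fun w => ¬ Bad V (toList w)))) +
          monAlgPi F V (MonoidAlgebra.ofCoeff
            (b.coeff.filter (fun w => ¬¬ Bad V (toList w)))) := by
      rw [hzero, add_zero]
    rw [this, ← map_add, ← MonoidAlgebra.ofCoeff_add, hsplit, MonoidAlgebra.ofCoeff_coeff, hb]
  · intro w hw
    rw [MonoidAlgebra.coeff_ofCoeff, Finsupp.support_filter, Finset.mem_filter] at hw
    exact ⟨hQ w hw.1, hw.2⟩

lemma pi_mem_ideal (I : Ideal (MonAlg F V)) (b : FreeAlg F m)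
    (h : ∀ w ∈ b.coeff.support, mono F V (toList w) ∈ I) : monAlgPi F V b ∈ I := by
  rw [pi_sum]
  refine Submodule.sum_mem I fun w hw => ?_
  show (b.coeff w) • mono F V (toList w) ∈ I
  rw [Algebra.smul_def]
  exact I.mul_mem_left _ (h w hw)

lemma absorb {d : ℕ} (r : MonAlg F V) {x : MonAlg F V}
    (hx : x ∈ Submodule.span F
      { a : MonAlg F V | ∃ u : List (Fin m), d ≤ u.length ∧ a = mono F V u }) :
    r * x ∈ Submodule.span F
      { a : MonAlg F V | ∃ u : List (Fin m), d ≤ u.length ∧ a = mono F V u } := by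
  induction hx using Submodule.span_induction with
  | mem a ha =>
    obtain ⟨u, hu, rfl⟩ := ha
    obtain ⟨b, hb⟩ := RingQuot.mkAlgHom_surjective F (monRel F V) r
    have hb' : monAlgPi F V b = r := hb
    rw [← hb', pi_sum, Finsupp.sum_mul]
    refine Submodule.sum_mem _ fun w hw => ?_
    show (b.coeff w) • mono F V (toList w) * mono F V u ∈ _
    rw [smul_mul_assoc, ← mono_append]
    refine Submodule.smul_mem _ _ (Submodule.subset_span ⟨toList w ++ u, ?_, rfl⟩)
    rw [List.length_append]
    exact le_trans hu (Nat.le_add_left _ _)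
  | zero => rw [mul_zero]; exact Submodule.zero_mem _
  | add a b _ _ ha hb => rw [mul_add]; exact Submodule.add_mem _ ha hb
  | smul c a _ ha => rw [mul_smul_comm]; exact Submodule.smul_mem _ c ha

end S15

/-- Let `A = F⟨x_1,…,x_m⟩/⟨w_1,…,w_r⟩` be a finitely presented
monomial algebra with all relations of length at most `d`, `d ≥ 2`.  Then `pro(A)`
is finitely generated as a left ideal: it is generated as a left ideal by the
monomials of length at most `d` lying in it; in particular,
`pro(A) ∩ A_{≥d} = A · (pro(A) ∩ A_d)`. -/
theorem statement15 (F : Type) [Field F] (m : ℕ) (W : Finset (List (Fin m)))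
    (V : Set (List (Fin m))) (hV : V = ↑W)
    (d : ℕ) (hd : 2 ≤ d) (hlen : ∀ u ∈ W, u.length ≤ d) :
    (proSet F (MonAlg F V) (homog F V) =
        ↑(Ideal.span { a : MonAlg F V |
            a ∈ proSet F (MonAlg F V) (homog F V) ∧
              ∃ u : List (Fin m), u.length ≤ d ∧ a = mono F V u })) ∧
      (proSet F (MonAlg F V) (homog F V) ∩
          ↑(Submodule.span F { a : MonAlg F V |
              ∃ u : List (Fin m), d ≤ u.length ∧ a = mono F V u }) =
        ↑(Ideal.span
            (proSet F (MonAlg F V) (homog F V) ∩ ↑(homog F V d)))) := by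
  have hlenV : ∀ w ∈ V, w.length ≤ d := by
    intro w hw
    exact hlen w (by rwa [hV, Finset.mem_coe] at hw)
  constructor
  · apply Set.Subset.antisymm
    · rintro f ⟨d', hd', hf⟩
      obtain ⟨a, ha⟩ := RingQuot.mkAlgHom_surjective F (monRel F V) f
      obtain ⟨b, hb, hgood⟩ := S15.good_rep V (Q := fun _ => True) a
        (show monAlgPi F V a = f from ha) (fun _ _ => trivial)
      rw [SetLike.mem_coe, ← hb]
      apply S15.pi_mem_ideal
      intro w hw
      refine S15.gen_short V hlenV (hgood w hw).2 hd' ?_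
      intro v hv hgv
      by_contra hnb
      have h0 : monAlgPi F V b * mono F V v = 0 := by
        rw [hb]; exact hf _ (S15.mono_mem_homog V hv)
      exact (Finsupp.mem_support_iff.mp hw) (S15.coeff_eq_zero V h0 hnb)
    · intro f hf
      rw [SetLike.mem_coe] at hf
      exact (Ideal.span_le (I := S15.proIdeal V)).mpr (fun a ha => ha.1) hf
  · apply Set.Subset.antisymm
    · rintro f ⟨⟨d', hd', hf⟩, hfs⟩
      rw [SetLike.mem_coe] at hfs
      obtain ⟨b, hb, hQ⟩ := S15.exists_rep V
        (Q := fun w : FreeMonoid (Fin m) => d ≤ (FreeMonoid.toList w).length) hfs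
      obtain ⟨b', hb', hgood⟩ := S15.good_rep V b hb hQ
      rw [SetLike.mem_coe, ← hb']
      apply S15.pi_mem_ideal
      intro w hw
      obtain ⟨hQw, hwgood⟩ := hgood w hw
      refine S15.gen_high V hlenV hwgood hd' ?_ hQw
      intro v hv hgv
      by_contra hnb
      have h0 : monAlgPi F V b' * mono F V v = 0 := by
        rw [hb']; exact hf _ (S15.mono_mem_homog V hv)
      exact (Finsupp.mem_support_iff.mp hw) (S15.coeff_eq_zero V h0 hnb)
    · intro f hf
      rw [SetLike.mem_coe] at hf
      constructor
      · exact (Ideal.span_le (I := S15.proIdeal V)).mpr (fun a ha => ha.1) hf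
      · rw [SetLike.mem_coe]
        induction hf using Submodule.span_induction with
        | mem a ha =>
          refine Submodule.span_le.mpr ?_ ha.2
          rintro x ⟨v, hv, rfl⟩
          exact Submodule.subset_span ⟨v, le_of_eq hv.symm, rfl⟩
        | zero => exact Submodule.zero_mem _
        | add x y _ _ hx hy => exact Submodule.add_mem _ hx hy
        | smul r x _ hx => rw [smul_eq_mul]; exact S15.absorb V r hx
end
end

section
/- Fix a finite alphabet Σ, an integer d ≥ 2, and a finite set W of words over Σ each of length at most d; call a word over Σ admissible if no element of W is a factor of it. Let ā_n denote the number of ≼-maximal coherent sequences (C_0, …, C_n), and let a_n denote the number of ≼-maximal prolongable sequences (C_0, …, C_n). Then both generating functions ∑_{n≥0} ā_n t^n and ∑_{n≥0} a_n t^n are rational functions; equivalently, the sequences (ā_n) and (a_n) eventually satisfy linear recurrences with constant coefficients. -/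
noncomputable section

/-- A word is admissible if it contains no forbidden factor from `W`. -/
def Admissible {s : ℕ} (W : Finset (List (Fin s))) (u : List (Fin s)) : Prop :=
  ∀ v ∈ W, ¬ v <:+: u

/-- The sequence `(C_0,…,C_n)` of nonempty subsets of the alphabet is *coherent*:
every word `u_0 u_1 ⋯ u_n` with `u_i ∈ C_i` is admissible. -/
def CoherentSeq {s : ℕ} (W : Finset (List (Fin s))) {n : ℕ}
    (C : Fin (n + 1) → Finset (Fin s)) : Prop :=
  (∀ i, (C i).Nonempty) ∧
    ∀ f : Fin (n + 1) → Fin s, (∀ i, f i ∈ C i) → Admissible W (List.ofFn f)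

/-- The sequence `(C_0,…,C_n)` is *prolongable*: it extends to an infinite
sequence of nonempty subsets all of whose segment words are admissible. -/
def ProlongableSeq {s : ℕ} (W : Finset (List (Fin s))) {n : ℕ}
    (C : Fin (n + 1) → Finset (Fin s)) : Prop :=
  ∃ D : ℕ → Finset (Fin s),
    (∀ i, (D i).Nonempty) ∧ (∀ i : Fin (n + 1), D (i : ℕ) = C i) ∧
      ∀ (i len : ℕ) (f : Fin len → Fin s),
        (∀ k : Fin len, f k ∈ D (i + (k : ℕ))) → Admissible W (List.ofFn f)

/-- `≼`-maximal coherent sequences. -/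
def MaxCoherent {s : ℕ} (W : Finset (List (Fin s))) {n : ℕ}
    (C : Fin (n + 1) → Finset (Fin s)) : Prop :=
  CoherentSeq W C ∧
    ∀ C' : Fin (n + 1) → Finset (Fin s),
      CoherentSeq W C' → (∀ i, C i ⊆ C' i) → C' = C

/-- `≼`-maximal prolongable sequences. -/
def MaxProlongable {s : ℕ} (W : Finset (List (Fin s))) {n : ℕ}
    (C : Fin (n + 1) → Finset (Fin s)) : Prop :=
  ProlongableSeq W C ∧
    ∀ C' : Fin (n + 1) → Finset (Fin s),
      ProlongableSeq W C' → (∀ i, C i ⊆ C' i) → C' = C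


open Classical Polynomial Finset Matrix

theorem mat_gf {ι : Type} [Fintype ι] [DecidableEq ι] (M : Matrix ι ι ℚ) (u y0 : ι → ℚ)
    (a : ℕ → ℚ) (ha : ∀ n, a n = u ⬝ᵥ (M ^ n).mulVec y0) :
    ∃ p q : Polynomial ℚ, q ≠ 0 ∧ (PowerSeries.mk a) * q = p := by
  set χ := M.charpoly with hχ
  set k := χ.natDegree with hk
  have hmon : χ.Monic := M.charpoly_monic
  have hch : ∑ i ∈ range (k+1), χ.coeff i • M ^ i = 0 := by
    have := M.aeval_self_charpoly
    rwa [Polynomial.aeval_eq_sum_range] at this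
  set q := χ.reverse with hq
  have hq0 : q ≠ 0 := by
    simp [hq, Polynomial.reverse_eq_zero]
    exact hmon.ne_zero
  have hqc : ∀ j ≤ k, q.coeff j = χ.coeff (k - j) := by
    intro j hj
    rw [hq, Polynomial.coeff_reverse, Polynomial.revAt_le hj]
  have hqc' : ∀ j, k < j → q.coeff j = 0 := by
    intro j hj
    apply Polynomial.coeff_eq_zero_of_natDegree_lt
    exact lt_of_le_of_lt (Polynomial.reverse_natDegree_le χ) hj
  have hvan : ∀ m, k ≤ m → PowerSeries.coeff m (PowerSeries.mk a * (q : PowerSeries ℚ)) = 0 := by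
    intro m hm
    rw [PowerSeries.coeff_mul, Finset.Nat.sum_antidiagonal_eq_sum_range_succ_mk]
    have h1 : ∀ j ∈ range (m+1), (PowerSeries.coeff j) (PowerSeries.mk a) *
        (PowerSeries.coeff (m - j)) (q : PowerSeries ℚ)
        = a j * q.coeff (m - j) := by
      intro j hj; rw [PowerSeries.coeff_mk, Polynomial.coeff_coe]
    rw [Finset.sum_congr rfl h1]
    have hlin : ∀ (c : ℕ → ℚ) (Bf : ℕ → Matrix ι ι ℚ) (t : Finset ℕ),
        u ⬝ᵥ ((∑ i ∈ t, c i • Bf i).mulVec y0) = ∑ i ∈ t, c i * (u ⬝ᵥ (Bf i).mulVec y0) := by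
      intro c Bf t
      induction t using Finset.induction_on with
      | empty => simp
      | insert _ _ hx ih =>
          rw [Finset.sum_insert hx, Finset.sum_insert hx, Matrix.add_mulVec,
            dotProduct_add, ← ih, Matrix.smul_mulVec, dotProduct_smul,
            smul_eq_mul]
    have key : ∑ j ∈ range (m+1), a j * q.coeff (m-j)
        = ∑ i ∈ range (k+1), χ.coeff i * a (m-k+i) := by
      have h2 : ∑ j ∈ range (m+1), a j * q.coeff (m-j)
          = ∑ j ∈ Finset.Ico (m-k) (m+1), a j * q.coeff (m-j) := by
        refine (Finset.sum_subset ?_ ?_).symm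
        · intro j hj; simp only [Finset.mem_Ico] at hj; exact Finset.mem_range.2 hj.2
        · intro j hj hj'
          simp only [Finset.mem_range] at hj
          simp only [Finset.mem_Ico, not_and, not_lt] at hj'
          rw [hqc' (m - j) (by omega), mul_zero]
      rw [h2, Finset.sum_Ico_eq_sum_range]
      have h3 : m + 1 - (m - k) = k + 1 := by omega
      rw [h3]
      refine Finset.sum_congr rfl ?_
      intro i hi
      simp only [Finset.mem_range] at hi
      have h4 : m - (m - k + i) = k - i := by omega
      have h5 : m - k + i = m - k + i := rfl
      rw [h4, hqc (k - i) (by omega)]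
      have h6 : k - (k - i) = i := by omega
      rw [h6, mul_comm]
    rw [key]
    have h7 : ∀ i ∈ range (k+1), χ.coeff i * a (m-k+i)
        = χ.coeff i * (u ⬝ᵥ ((M ^ (m-k) * M ^ i).mulVec y0)) := by
      intro i hi
      rw [ha, ← pow_add]
    rw [Finset.sum_congr rfl h7, ← hlin]
    have h8 : ∑ i ∈ range (k+1), χ.coeff i • (M ^ (m-k) * M ^ i)
        = M ^ (m-k) * ∑ i ∈ range (k+1), χ.coeff i • M ^ i := by
      rw [Finset.mul_sum]
      refine Finset.sum_congr rfl fun i _ => ?_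
      rw [mul_smul_comm]
    rw [h8, hch, mul_zero]
    simp
  refine ⟨PowerSeries.trunc k (PowerSeries.mk a * q), q, hq0, ?_⟩
  ext m
  rw [Polynomial.coeff_coe, PowerSeries.coeff_trunc]
  split
  · rfl
  · exact hvan m (by omega)

open scoped Classical

section LocalCount

variable {A : Type} [Fintype A]

/-- padded columns: positions `m < w` are left padding. -/
def padw (w n : ℕ) (C : Fin (n+1) → A) (m : ℕ) : Option A :=
  if h : w ≤ m ∧ m - w < n + 1 then some (C ⟨m - w, h.2⟩) else none

def winOf (w n : ℕ) (C : Fin (n+1) → A) (t : ℕ) : Fin w → Option A :=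
  fun j => padw w n C (t + j)

def Loc (w : ℕ) (Q : (Fin w → Option A) → Prop) (n : ℕ) (C : Fin (n+1) → A) : Prop :=
  ∀ t, Q (winOf w n C t)

def shiftw {w : ℕ} (σ : Fin w → Option A) (x : A) : Fin w → Option A :=
  fun j => if h : (j:ℕ)+1 < w then σ ⟨(j:ℕ)+1,h⟩ else some x

def shiftout {w : ℕ} (σ : Fin w → Option A) (r : ℕ) : Fin w → Option A :=
  fun j => if h : (j:ℕ)+r < w then σ ⟨(j:ℕ)+r,h⟩ else none

lemma padw_snoc (w n m : ℕ) (C : Fin (n+1) → A) (x : A) (h : m ≤ n + w) :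
    padw w (n+1) (Fin.snoc C x) m = padw w n C m := by
  unfold padw
  by_cases hw : w ≤ m
  · have h1 : m - w < n + 1 := by omega
    have h2 : m - w < n + 2 := by omega
    rw [dif_pos ⟨hw, h2⟩, dif_pos ⟨hw, h1⟩]
    have h3 : (⟨m - w, h2⟩ : Fin (n+2)) = Fin.castSucc ⟨m - w, h1⟩ := rfl
    rw [h3, Fin.snoc_castSucc]
  · rw [dif_neg (by omega), dif_neg (by omega)]

lemma winOf_snoc_le (w n : ℕ) (hw : 1 ≤ w) (C : Fin (n+1) → A) (x : A) (t : ℕ)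
    (ht : t ≤ n + 1) : winOf w (n+1) (Fin.snoc C x) t = winOf w n C t := by
  funext j
  exact padw_snoc w n (t + j) C x (by have := j.2; omega)

lemma winOf_snoc_last (w n : ℕ) (hw : 1 ≤ w) (C : Fin (n+1) → A) (x : A) :
    winOf w (n+1) (Fin.snoc C x) (n+2) = shiftw (winOf w n C (n+1)) x := by
  funext j
  unfold winOf shiftw
  by_cases h : (j:ℕ)+1 < w
  · rw [dif_pos h]
    have h2 : (n + 2 + (j:ℕ)) ≤ n + w := by omega
    rw [padw_snoc w n _ C x h2]
    have : n + 2 + (j:ℕ) = n + 1 + ((j:ℕ)+1) := by omega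
    rw [this]
  · rw [dif_neg h]
    have hj : (j:ℕ) + 1 = w := by have := j.2; omega
    unfold padw
    have h1 : w ≤ n + 2 + (j:ℕ) ∧ (n + 2 + (j:ℕ)) - w < n + 2 := by omega
    rw [dif_pos h1]
    have h3 : (⟨n + 2 + (j:ℕ) - w, h1.2⟩ : Fin (n+2)) = Fin.last (n+1) := by
      apply Fin.ext; simp only [Fin.val_last]; omega
    rw [h3, Fin.snoc_last]

lemma winOf_shiftout (w n : ℕ) (C : Fin (n+1) → A) (r : ℕ) :
    winOf w n C (n+1+r) = shiftout (winOf w n C (n+1)) r := by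
  funext j
  unfold winOf shiftout
  by_cases h : (j:ℕ)+r < w
  · rw [dif_pos h]
    have : n + 1 + r + (j:ℕ) = n + 1 + ((j:ℕ)+r) := by omega
    rw [this]
  · rw [dif_neg h]
    unfold padw
    rw [dif_neg (by omega)]

variable (w : ℕ) (Q : (Fin w → Option A) → Prop)

def gset (n : ℕ) (σ : Fin w → Option A) : Finset (Fin (n+1) → A) :=
  Finset.univ.filter fun C => winOf w n C (n+1) = σ ∧ ∀ t ≤ n+1, Q (winOf w n C t)

lemma gset_step (hw : 1 ≤ w) (n : ℕ) (σ' : Fin w → Option A) :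
    (gset w Q (n+1) σ').card = ∑ σ : Fin w → Option A,
      (Finset.univ.filter fun x : A => Q σ' ∧ shiftw σ x = σ').card * (gset w Q n σ).card := by
  rw [Finset.card_eq_sum_card_fiberwise
    (f := fun C : Fin (n+2) → A => winOf w n (Fin.init C) (n+1)) (t := Finset.univ)
    (fun C _ => Finset.mem_univ _)]
  refine Finset.sum_congr rfl fun σ _ => ?_
  rw [← Finset.card_product]
  apply Finset.card_bij' (fun C _ => (C (Fin.last (n+1)), Fin.init C))
    (fun p _ => Fin.snoc p.2 p.1)
  · intro C hC
    simp only [Finset.mem_filter, Finset.mem_univ, true_and, gset] at hC ⊢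
    obtain ⟨⟨h1, h2⟩, h3⟩ := hC
    have hsn : C = Fin.snoc (Fin.init C) (C (Fin.last (n+1))) := (Fin.snoc_init_self C).symm
    rw [Finset.mem_product]
    constructor
    · simp only [Finset.mem_filter, Finset.mem_univ, true_and]
      constructor
      · rw [← h1]; exact h2 (n+2) (by omega)
      · rw [← h3, ← h1]
        conv_rhs => rw [hsn]
        rw [winOf_snoc_last w n hw]
    · simp only [gset, Finset.mem_filter, Finset.mem_univ, true_and]
      refine ⟨h3, fun t ht => ?_⟩
      have := h2 t (by omega)
      rwa [hsn, winOf_snoc_le w n hw _ _ t ht] at this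
  · intro p hp
    rw [Finset.mem_product] at hp
    obtain ⟨hx, hC'⟩ := hp
    simp only [Finset.mem_filter, Finset.mem_univ, true_and] at hx
    simp only [gset, Finset.mem_filter, Finset.mem_univ, true_and] at hC'
    simp only [gset, Finset.mem_filter, Finset.mem_univ, true_and]
    constructor
    · constructor
      · rw [winOf_snoc_last w n hw, hC'.1, hx.2]
      · intro t ht
        rcases Nat.lt_or_ge t (n+2) with h | h
        · rw [winOf_snoc_le w n hw _ _ t (by omega)]
          exact hC'.2 t (by omega)
        · have : t = n + 2 := by omega
          rw [this, winOf_snoc_last w n hw, hC'.1, hx.2]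
          exact hx.1
    · rw [Fin.init_snoc]
      exact hC'.1
  · intro C hC
    exact Fin.snoc_init_self C
  · intro p hp
    simp only [Fin.snoc_last, Fin.init_snoc]

lemma loc_card (hw : 1 ≤ w) (n : ℕ) :
    (Finset.univ.filter fun C : Fin (n+1) → A => Loc w Q n C).card
      = ∑ σ : Fin w → Option A,
        (if (∀ r, 1 ≤ r → Q (shiftout σ r)) then 1 else 0) * (gset w Q n σ).card := by
  rw [Finset.card_eq_sum_card_fiberwise
    (f := fun C : Fin (n+1) → A => winOf w n C (n+1)) (t := Finset.univ)
    (fun C _ => Finset.mem_univ _)]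
  refine Finset.sum_congr rfl fun σ _ => ?_
  by_cases hF : ∀ r, 1 ≤ r → Q (shiftout σ r)
  · rw [if_pos hF, one_mul]
    congr 1
    ext C
    simp only [Finset.mem_filter, Finset.mem_univ, true_and, gset]
    constructor
    · rintro ⟨hL, hσ⟩
      exact ⟨hσ, fun t _ => hL t⟩
    · rintro ⟨hσ, hQ⟩
      refine ⟨fun t => ?_, hσ⟩
      rcases Nat.lt_or_ge t (n+2) with h | h
      · exact hQ t (by omega)
      · have : t = n + 1 + (t - (n+1)) := by omega
        rw [this, winOf_shiftout, hσ]
        exact hF _ (by omega)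
  · rw [if_neg hF, zero_mul, Finset.card_eq_zero]
    ext C
    simp only [Finset.mem_filter, Finset.mem_univ, true_and, Finset.notMem_empty, iff_false,
      not_and]
    intro hL hσ
    apply hF
    intro r hr
    have := hL (n+1+r)
    rwa [winOf_shiftout, hσ] at this

theorem loc_gf (hw : 1 ≤ w) :
    ∃ p q : Polynomial ℚ, q ≠ 0 ∧
      (PowerSeries.mk fun n => ((Nat.card {C : Fin (n+1) → A // Loc w Q n C}) : ℚ)) * q = p := by
  set Mq : Matrix (Fin w → Option A) (Fin w → Option A) ℚ := fun σ' σ =>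
    ((Finset.univ.filter fun x : A => Q σ' ∧ shiftw σ x = σ').card : ℚ) with hMq
  set u : (Fin w → Option A) → ℚ :=
    fun σ => if (∀ r, 1 ≤ r → Q (shiftout σ r)) then 1 else 0 with hu
  set y0 : (Fin w → Option A) → ℚ := fun σ => ((gset w Q 0 σ).card : ℚ) with hy0
  have hy : ∀ n σ, ((gset w Q n σ).card : ℚ) = (Mq ^ n).mulVec y0 σ := by
    intro n
    induction n with
    | zero => intro σ; rw [pow_zero, Matrix.one_mulVec]
    | succ n ih =>
      intro σ'
      have h1 : ((gset w Q (n+1) σ').card : ℚ)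
          = ∑ σ : Fin w → Option A, Mq σ' σ * ((gset w Q n σ).card : ℚ) := by
        rw [gset_step w Q hw n σ']
        push_cast
        rfl
      rw [h1]
      have h2 : (Mq ^ (n+1)) = Mq * Mq ^ n := by rw [pow_succ']
      rw [h2, ← Matrix.mulVec_mulVec]
      have h3 : (Mq.mulVec ((Mq ^ n).mulVec y0)) σ'
          = ∑ σ, Mq σ' σ * ((Mq ^ n).mulVec y0) σ := rfl
      rw [h3]
      exact Finset.sum_congr rfl fun σ _ => by rw [ih σ]
  have ha : ∀ n, ((Nat.card {C : Fin (n+1) → A // Loc w Q n C}) : ℚ)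
      = u ⬝ᵥ (Mq ^ n).mulVec y0 := by
    intro n
    rw [Nat.card_eq_fintype_card, Fintype.card_subtype, loc_card w Q hw n]
    have h4 : u ⬝ᵥ (Mq ^ n).mulVec y0 = ∑ σ, u σ * ((Mq ^ n).mulVec y0) σ := rfl
    rw [h4]
    push_cast
    refine Finset.sum_congr rfl fun σ _ => ?_
    rw [← hy n σ]
  exact mat_gf Mq u y0 _ (fun n => ha n)

end LocalCount

section Comb

variable {s : ℕ}

/-- columns of a finite sequence -/
def colsOf (n : ℕ) (C : Fin (n+1) → Finset (Fin s)) : ℕ → Option (Finset (Fin s)) :=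
  fun i => if h : i < n+1 then some (C ⟨i, h⟩) else none

/-- the word `v` can be placed at position `j` choosing letters from the columns -/
def fitsO (v : List (Fin s)) (c : ℕ → Option (Finset (Fin s))) (j : ℕ) : Prop :=
  ∀ m (h : m < v.length), ∃ B, c (j+m) = some B ∧ v[m] ∈ B

def HasFit (W : Finset (List (Fin s))) (c : ℕ → Option (Finset (Fin s))) : Prop :=
  ∃ v ∈ W, ∃ j, fitsO v c j

/-- enlarge the column at position `i0` by the letter `x` -/
def updO (c : ℕ → Option (Finset (Fin s))) (i0 : ℕ) (x : Fin s) :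
    ℕ → Option (Finset (Fin s)) :=
  fun i => if i = i0 then Option.map (insert x) (c i) else c i

lemma updO_some {c : ℕ → Option (Finset (Fin s))} {i0 : ℕ} {x : Fin s} {q : ℕ}
    {B : Finset (Fin s)} (h : updO c i0 x q = some B) : ∃ B₀, c q = some B₀ := by
  unfold updO at h
  by_cases hq : q = i0
  · rw [if_pos hq] at h
    cases hc : c q with
    | none => rw [hc] at h; simp at h
    | some B0 => exact ⟨B0, rfl⟩
  · rw [if_neg hq] at h; exact ⟨B, h⟩

lemma fitsO_congr {v : List (Fin s)} {c₁ c₂ : ℕ → Option (Finset (Fin s))} {j₁ j₂ : ℕ}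
    (h : ∀ m, m < v.length → c₁ (j₁+m) = c₂ (j₂+m)) (hf : fitsO v c₁ j₁) : fitsO v c₂ j₂ := by
  intro m hm
  obtain ⟨B, hB, hv⟩ := hf m hm
  exact ⟨B, (h m hm) ▸ hB, hv⟩

lemma colsOf_some {n : ℕ} {C : Fin (n+1) → Finset (Fin s)} {i : ℕ} {B : Finset (Fin s)} :
    colsOf n C i = some B ↔ ∃ h : i < n+1, B = C ⟨i, h⟩ := by
  unfold colsOf
  by_cases h : i < n+1
  · rw [dif_pos h]
    constructor
    · intro hB
      exact ⟨h, (Option.some_injective _ hB).symm⟩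
    · rintro ⟨h', rfl⟩; rfl
  · rw [dif_neg h]
    constructor
    · intro hB; simp at hB
    · rintro ⟨h', rfl⟩; omega

lemma adm_iff {n : ℕ} (W : Finset (List (Fin s))) (C : Fin (n+1) → Finset (Fin s))
    (hne : ∀ i, (C i).Nonempty) :
    (∀ f : Fin (n+1) → Fin s, (∀ i, f i ∈ C i) → Admissible W (List.ofFn f)) ↔
      ¬ HasFit W (colsOf n C) := by
  constructor
  · rintro hadm ⟨v, hv, j, hfit⟩
    classical
    set f : Fin (n+1) → Fin s := fun i =>
      if h : j ≤ (i:ℕ) ∧ (i:ℕ) - j < v.length then v[(i:ℕ)-j]'(h.2) else (hne i).choose with hf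
    have hmem : ∀ i, f i ∈ C i := by
      intro i
      simp only [hf]
      by_cases h : j ≤ (i:ℕ) ∧ (i:ℕ) - j < v.length
      · rw [dif_pos h]
        obtain ⟨B, hB, hvB⟩ := hfit ((i:ℕ)-j) h.2
        have hji : j + ((i:ℕ)-j) = (i:ℕ) := by omega
        rw [hji] at hB
        obtain ⟨hlt, rfl⟩ := colsOf_some.1 hB
        have : (⟨(i:ℕ), hlt⟩ : Fin (n+1)) = i := by apply Fin.ext; rfl
        rwa [this] at hvB
      · rw [dif_neg h]; exact (hne i).choose_spec
    have hinf : v <:+: List.ofFn f := by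
      rw [List.infix_iff_getElem?]
      rcases Nat.eq_zero_or_pos v.length with h0 | h0
      · refine ⟨0, by simp [h0], fun i h => absurd h (by omega)⟩
      · obtain ⟨B, hB, -⟩ := hfit (v.length - 1) (by omega)
        have hle : j + v.length ≤ n + 1 := by
          obtain ⟨hlt, -⟩ := colsOf_some.1 hB
          omega
        refine ⟨j, by simp [List.length_ofFn]; omega, ?_⟩
        intro i h
        rw [List.getElem?_ofFn]
        have hi : i + j < n + 1 := by omega
        simp only [dif_pos hi]
        congr 1
        simp only [hf]
        have hcond : j ≤ i + j ∧ (i + j) - j < v.length := by omega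
        rw [dif_pos hcond]
        congr 1
        omega
    exact hadm f hmem v hv hinf
  · intro hnf f hmemf v hv hinf
    apply hnf
    rw [List.infix_iff_getElem?] at hinf
    obtain ⟨k, hk, hg⟩ := hinf
    refine ⟨v, hv, k, ?_⟩
    intro i h
    have hi : k + i < n + 1 := by
      simp only [List.length_ofFn] at hk; omega
    refine ⟨C ⟨k+i, hi⟩, colsOf_some.2 ⟨hi, rfl⟩, ?_⟩
    have hgi := hg i h
    rw [List.getElem?_ofFn] at hgi
    have hik : i + k < n + 1 := by omega
    simp only [dif_pos hik] at hgi
    have hfe : (⟨i+k, hik⟩ : Fin (n+1)) = ⟨k+i, hi⟩ := by apply Fin.ext; simp; omega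
    rw [← Option.some_injective _ hgi, ← hfe]
    exact hmemf _
  
lemma coherent_iff {n : ℕ} (W : Finset (List (Fin s))) (C : Fin (n+1) → Finset (Fin s)) :
    CoherentSeq W C ↔ (∀ i, (C i).Nonempty) ∧ ¬ HasFit W (colsOf n C) := by
  unfold CoherentSeq
  constructor
  · rintro ⟨h1, h2⟩
    exact ⟨h1, (adm_iff W C h1).1 h2⟩
  · rintro ⟨h1, h2⟩
    exact ⟨h1, (adm_iff W C h1).2 h2⟩

lemma colsOf_update {n : ℕ} (C : Fin (n+1) → Finset (Fin s)) (i0 : Fin (n+1)) (x : Fin s) :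
    colsOf n (Function.update C i0 (insert x (C i0))) = updO (colsOf n C) (i0:ℕ) x := by
  funext i
  simp only [colsOf, updO]
  by_cases h : i < n+1
  · rw [dif_pos h, dif_pos h]
    by_cases hii : i = (i0:ℕ)
    · have he : (⟨i, h⟩ : Fin (n+1)) = i0 := by apply Fin.ext; exact hii
      rw [if_pos hii, he, Function.update_self]
      rfl
    · have he : (⟨i, h⟩ : Fin (n+1)) ≠ i0 := by
        intro hc; apply hii; rw [← hc]
      rw [if_neg hii, Function.update_of_ne he]
  · rw [dif_neg h, dif_neg h, if_neg (by omega)]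

lemma maxcoh_iff {n : ℕ} (W : Finset (List (Fin s))) (C : Fin (n+1) → Finset (Fin s)) :
    MaxCoherent W C ↔ CoherentSeq W C ∧
      ∀ (i : Fin (n+1)) (x : Fin s), x ∉ C i → HasFit W (updO (colsOf n C) (i:ℕ) x) := by
  constructor
  · rintro ⟨hcoh, hmax⟩
    refine ⟨hcoh, fun i x hx => ?_⟩
    set C' := Function.update C i (insert x (C i)) with hC'
    have hsub : ∀ k, C k ⊆ C' k := by
      intro k
      rw [hC']
      by_cases hk : k = i
      · subst hk; rw [Function.update_self]; exact Finset.subset_insert _ _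
      · rw [Function.update_of_ne hk]
    have hne : C' ≠ C := by
      intro hc
      apply hx
      have : C' i = C i := by rw [hc]
      rw [hC', Function.update_self] at this
      rw [← this]
      exact Finset.mem_insert_self _ _
    have hncoh : ¬ CoherentSeq W C' := fun h => hne (hmax C' h hsub)
    rw [coherent_iff] at hncoh
    have hne' : ∀ k, (C' k).Nonempty := by
      intro k
      by_cases hk : k = i
      · subst hk; rw [hC', Function.update_self]; exact Finset.insert_nonempty _ _
      · rw [hC', Function.update_of_ne hk]; exact hcoh.1 k
    have hfit : HasFit W (colsOf n C') := by
      by_contra hh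
      exact hncoh ⟨hne', hh⟩
    rwa [hC', colsOf_update] at hfit
  · rintro ⟨hcoh, hup⟩
    refine ⟨hcoh, fun C' hcoh' hsub => ?_⟩
    by_contra hne
    have hex : ∃ i, C' i ≠ C i := by
      by_contra h; push_neg at h; exact hne (funext h)
    obtain ⟨i, hi⟩ := hex
    have hex2 : ∃ x, x ∈ C' i ∧ x ∉ C i := by
      by_contra h
      push_neg at h
      exact hi (Finset.Subset.antisymm (fun x hx => by
        by_contra hc
        exact hc (h x hx)) (hsub i))
    obtain ⟨x, hx', hx⟩ := hex2
    obtain ⟨v, hv, j, hfitv⟩ := hup i x hx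
    have hfit' : fitsO v (colsOf n C') j := by
      intro m hm
      obtain ⟨B, hB, hvB⟩ := hfitv m hm
      unfold updO at hB
      by_cases hji : j + m = (i:ℕ)
      · rw [if_pos hji] at hB
        cases hOB : colsOf n C (j+m) with
        | none => rw [hOB] at hB; simp at hB
        | some B0 =>
          rw [hOB] at hB
          simp only [Option.map_some] at hB
          obtain ⟨hlt, hB0⟩ := colsOf_some.1 hOB
          have hBi : B = insert x B0 := (Option.some_injective _ hB).symm
          refine ⟨C' ⟨j+m, hlt⟩, colsOf_some.2 ⟨hlt, rfl⟩, ?_⟩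
          rw [hBi] at hvB
          rcases Finset.mem_insert.1 hvB with h | h
          · rw [h]
            have : (⟨j+m, hlt⟩ : Fin (n+1)) = i := by apply Fin.ext; exact hji
            rw [this]; exact hx'
          · exact hsub _ (hB0 ▸ h)
      · rw [if_neg hji] at hB
        obtain ⟨hlt, hB0⟩ := colsOf_some.1 hB
        refine ⟨C' ⟨j+m, hlt⟩, colsOf_some.2 ⟨hlt, rfl⟩, ?_⟩
        exact hsub _ (hB0 ▸ hvB)
    exact ((coherent_iff W C').1 hcoh').2 ⟨v, hv, j, hfit'⟩

lemma fit_covers {n : ℕ} {W : Finset (List (Fin s))} {C : Fin (n+1) → Finset (Fin s)}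
    (hnofit : ¬ HasFit W (colsOf n C)) {i0 : ℕ} {x : Fin s} {v : List (Fin s)} (hv : v ∈ W)
    {j : ℕ} (hfit : fitsO v (updO (colsOf n C) i0 x) j) : j ≤ i0 ∧ i0 < j + v.length := by
  by_contra h
  apply hnofit
  refine ⟨v, hv, j, ?_⟩
  intro m hm
  obtain ⟨B, hB, hvB⟩ := hfit m hm
  have hne : j + m ≠ i0 := by omega
  rw [updO, if_neg hne] at hB
  exact ⟨B, hB, hvB⟩

end Comb
section WinCoh

variable {s : ℕ}

def wext {A : Type} {w : ℕ} (σ : Fin w → Option A) : ℕ → Option A :=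
  fun j => if h : j < w then σ ⟨j, h⟩ else none

lemma wext_winOf {A : Type} {w n t j : ℕ} (hj : j < w) (C : Fin (n+1) → A) :
    wext (winOf w n C t) j = padw w n C (t + j) := by
  unfold wext winOf
  rw [dif_pos hj]

lemma padw_eq_colsOf (w n : ℕ) (C : Fin (n+1) → Finset (Fin s)) (m : ℕ) :
    padw w n C m = if w ≤ m then colsOf n C (m - w) else none := by
  unfold padw colsOf
  by_cases h1 : w ≤ m
  · rw [if_pos h1]
    by_cases h2 : m - w < n+1
    · rw [dif_pos ⟨h1, h2⟩, dif_pos h2]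
    · rw [dif_neg (by omega), dif_neg h2]
  · rw [if_neg h1, dif_neg (by omega)]

def QcWin (W : Finset (List (Fin s))) (d : ℕ)
    (win : Fin (2*d-1) → Option (Finset (Fin s))) : Prop :=
  ∀ B, wext win (d-1) = some B →
    B.Nonempty ∧
    (¬ ∃ v ∈ W, ∃ j, j ≤ d-1 ∧ d-1 ≤ j + v.length ∧ fitsO v (wext win) j) ∧
    (∀ x, x ∉ B → ∃ v ∈ W, ∃ j, j ≤ d-1 ∧ d-1 ≤ j + v.length ∧
        fitsO v (updO (wext win) (d-1) x) j)

theorem maxcoh_loc (W : Finset (List (Fin s))) (d : ℕ) (hd : 2 ≤ d)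
    (hlen : ∀ u ∈ W, u.length ≤ d) (n : ℕ) (C : Fin (n+1) → Finset (Fin s)) :
    MaxCoherent W C ↔ Loc (2*d-1) (QcWin W d) n C := by
  constructor
  · intro hmax
    obtain ⟨hcoh, hup⟩ := (maxcoh_iff W C).1 hmax
    obtain ⟨hne, hnofit⟩ := (coherent_iff W C).1 hcoh
    intro t B hB
    rw [wext_winOf (by omega), padw_eq_colsOf] at hB
    have hwt : 2*d-1 ≤ t + (d-1) := by
      by_contra h
      rw [if_neg h] at hB
      simp at hB
    rw [if_pos hwt] at hB
    obtain ⟨hlt, rfl⟩ := colsOf_some.1 hB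
    set i : ℕ := t + (d-1) - (2*d-1) with hidef
    refine ⟨hne _, ?_, ?_⟩
    · rintro ⟨v, hv, j, hj1, hj2, hfit⟩
      rcases Nat.eq_zero_or_pos v.length with h0 | h0
      · have hvnil : v = [] := List.eq_nil_of_length_eq_zero h0
        have := hcoh.2 (fun k => (hne k).choose) (fun k => (hne k).choose_spec) v hv
        rw [hvnil] at this
        exact this List.nil_infix
      · apply hnofit
        obtain ⟨B0, hB0, -⟩ := hfit 0 (by omega)
        have hjw : j + 0 < 2*d-1 := by
          by_contra h
          unfold wext at hB0
          rw [dif_neg h] at hB0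
          simp at hB0
        rw [wext_winOf hjw, padw_eq_colsOf] at hB0
        have hwt0 : 2*d-1 ≤ t + (j+0) := by
          by_contra h
          rw [if_neg h] at hB0
          simp at hB0
        refine ⟨v, hv, t + j - (2*d-1), fitsO_congr ?_ hfit⟩
        intro m hm
        have hvd := hlen v hv
        have hjm : j + m < 2*d-1 := by omega
        rw [wext_winOf hjm, padw_eq_colsOf, if_pos (by omega)]
        congr 1
        omega
    · intro x hx
      obtain ⟨v, hv, j, hfitv⟩ := hup ⟨i, hlt⟩ x hx
      have hival : ((⟨i, hlt⟩ : Fin (n+1)) : ℕ) = i := rfl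
      rw [hival] at hfitv
      have hcov := fit_covers hnofit hv hfitv
      have hvd := hlen v hv
      refine ⟨v, hv, j + (d-1) - i, by omega, by omega, fitsO_congr ?_ hfitv⟩
      intro m hm
      have hjm : (j + (d-1) - i) + m < 2*d-1 := by omega
      simp only [updO]
      have hcentr : ((j + (d-1) - i) + m = d-1) ↔ (j + m = i) := by omega
      by_cases hc : j + m = i
      · rw [if_pos hc, if_pos (hcentr.2 hc)]
        congr 1
        rw [wext_winOf hjm, padw_eq_colsOf, if_pos (by omega)]
        congr 1
        omega
      · rw [if_neg hc, if_neg (fun h => hc (hcentr.1 h))]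
        rw [wext_winOf hjm, padw_eq_colsOf, if_pos (by omega)]
        congr 1
        omega
  · intro hloc
    have hcen : ∀ i : Fin (n+1),
        wext (winOf (2*d-1) n C ((i:ℕ)+d)) (d-1) = some (C i) := by
      intro i
      rw [wext_winOf (by omega), padw_eq_colsOf, if_pos (by omega)]
      have hidx : (i:ℕ) + d + (d-1) - (2*d-1) = (i:ℕ) := by omega
      rw [hidx]
      exact colsOf_some.2 ⟨i.isLt, by rw [Fin.eta]⟩
    have hne : ∀ i, (C i).Nonempty := fun i => ((hloc ((i:ℕ)+d)) _ (hcen i)).1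
    have hnofit : ¬ HasFit W (colsOf n C) := by
      rintro ⟨v, hv, j0, hfit⟩
      rcases Nat.eq_zero_or_pos v.length with h0 | h0
      · obtain ⟨-, hnf, -⟩ := hloc ((0:ℕ)+d) _ (hcen ⟨0, by omega⟩)
        exact hnf ⟨v, hv, d-1, le_rfl, by omega, fun m hm => absurd hm (by omega)⟩
      · have hj0 : j0 < n+1 := by
          obtain ⟨B0, hB0, -⟩ := hfit 0 h0
          rw [Nat.add_zero] at hB0
          obtain ⟨hlt, -⟩ := colsOf_some.1 hB0
          omega
        obtain ⟨-, hnf, -⟩ := hloc (j0+d) _ (hcen ⟨j0, hj0⟩)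
        apply hnf
        refine ⟨v, hv, d-1, le_rfl, by omega, fitsO_congr ?_ hfit⟩
        intro m hm
        have hvd := hlen v hv
        rw [wext_winOf (by omega), padw_eq_colsOf, if_pos (by omega)]
        congr 1
        omega
    rw [maxcoh_iff]
    refine ⟨(coherent_iff W C).2 ⟨hne, hnofit⟩, ?_⟩
    intro i x hx
    obtain ⟨-, -, hfx⟩ := hloc ((i:ℕ)+d) _ (hcen i)
    obtain ⟨v, hv, j', hj'1, hj'2, hfit⟩ := hfx x hx
    rcases Nat.eq_zero_or_pos v.length with h0 | h0
    · exact ⟨v, hv, 0, fun m hm => absurd hm (by omega)⟩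
    · obtain ⟨B0, hB0, -⟩ := hfit 0 h0
      obtain ⟨B1, hB1⟩ := updO_some hB0
      have hj'w : j' + 0 < 2*d-1 := by
        by_contra h
        unfold wext at hB1
        rw [dif_neg h] at hB1
        simp at hB1
      rw [wext_winOf hj'w, padw_eq_colsOf] at hB1
      have hwt : 2*d-1 ≤ (i:ℕ) + d + (j'+0) := by
        by_contra h
        rw [if_neg h] at hB1
        simp at hB1
      refine ⟨v, hv, (i:ℕ)+d+j' - (2*d-1), fitsO_congr ?_ hfit⟩
      intro m hm
      have hvd := hlen v hv
      have hjm : j' + m < 2*d-1 := by omega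
      simp only [updO]
      have hcentr : (j'+m = d-1) ↔ ((i:ℕ)+d+j'-(2*d-1)+m = (i:ℕ)) := by omega
      by_cases hc : j'+m = d-1
      · rw [if_pos hc, if_pos (hcentr.1 hc)]
        congr 1
        rw [wext_winOf hjm, padw_eq_colsOf, if_pos (by omega)]
        congr 1
        omega
      · rw [if_neg hc, if_neg (fun h => hc (hcentr.2 h))]
        rw [wext_winOf hjm, padw_eq_colsOf, if_pos (by omega)]
        congr 1
        omega

end WinCoh
section Prol

variable {s : ℕ}

def listCols (l : List (Finset (Fin s))) : ℕ → Option (Finset (Fin s)) := fun i => l[i]?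

def ExtOK (W : Finset (List (Fin s))) (τ : List (Finset (Fin s))) : Prop :=
  ∀ m, ∃ ρ : List (Finset (Fin s)), ρ.length = m ∧ (∀ B ∈ ρ, B.Nonempty) ∧
    ¬ HasFit W (listCols (τ ++ ρ))

def lastList (d n : ℕ) (C : Fin (n+1) → Finset (Fin s)) : List (Finset (Fin s)) :=
  (List.range (d-1)).filterMap (fun r => if d ≤ n + 2 + r then colsOf n C (n + 2 + r - d) else none)

/-- generic spec for `filterMap` over `range` when the pattern of `some`s is a final segment -/
lemma filterMap_range_spec {A : Type} (c : ℕ → Option A) (N k0 : ℕ)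
    (hsome : ∀ r, r < N → ((c r).isSome ↔ k0 ≤ r)) :
    ((List.range N).filterMap c).length = N - k0 ∧
      ∀ p, ((List.range N).filterMap c)[p]? = if k0 + p < N then c (k0 + p) else none := by
  induction N with
  | zero => refine ⟨by simp, fun p => by simp⟩
  | succ N ih =>
    obtain ⟨ihl, ihg⟩ := ih (fun r hr => hsome r (by omega))
    rw [List.range_succ, List.filterMap_append]
    by_cases hk : k0 ≤ N
    · have hs : (c N).isSome := (hsome N (by omega)).2 hk
      obtain ⟨a, ha⟩ := Option.isSome_iff_exists.1 hs
      have hfm : List.filterMap c [N] = [a] := by simp [ha]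
      constructor
      · rw [List.length_append, ihl, hfm]
        simp
        omega
      · intro p
        rw [List.getElem?_append, ihl, hfm]
        by_cases hp : p < N - k0
        · rw [if_pos hp, ihg p, if_pos (by omega), if_pos (by omega)]
        · rw [if_neg hp]
          by_cases hp2 : p = N - k0
          · have : p - (N - k0) = 0 := by omega
            rw [this, if_pos (by omega)]
            have : k0 + p = N := by omega
            rw [this]
            simp [ha]
          · have h1 : p - (N - k0) ≠ 0 := by omega
            rw [if_neg (by omega)]
            cases hq : p - (N - k0) with
            | zero => omega
            | succ q => simp
    · have hs : c N = none := by
        cases hc : c N with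
        | none => rfl
        | some a => have := (hsome N (by omega)).1 (by simp [hc]); omega
      have hfm : List.filterMap c [N] = [] := by simp [hs]
      rw [hfm, List.append_nil]
      refine ⟨by rw [ihl]; omega, fun p => ?_⟩
      rw [ihg p]
      by_cases hp : k0 + p < N
      · rw [if_pos hp, if_pos (by omega)]
      · rw [if_neg hp]
        by_cases h2 : k0 + p < N + 1
        · rw [if_pos h2]
          have h3 : k0 + p = N := by omega
          rw [h3, hs]
        · rw [if_neg h2]

lemma lastList_spec (d n : ℕ) (hd : 2 ≤ d) (C : Fin (n+1) → Finset (Fin s)) :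
    (lastList d n C).length = min (d-1) (n+1) ∧
      ∀ p, (lastList d n C)[p]? = if h : p < min (d-1) (n+1)
        then some (C ⟨n+1 - min (d-1) (n+1) + p, by omega⟩) else none := by
  have hsome : ∀ r, r < d-1 →
      (((fun r => if d ≤ n + 2 + r then colsOf n C (n + 2 + r - d) else none) r).isSome
        ↔ (d - 1 - (n+1)) ≤ r) := by
    intro r hr
    by_cases hc : d ≤ n + 2 + r
    · simp only [if_pos hc]
      unfold colsOf
      by_cases h2 : n + 2 + r - d < n + 1
      · rw [dif_pos h2]; simp; omega
      · rw [dif_neg h2]; simp; omega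
    · simp only [if_neg hc]; simp; omega
  obtain ⟨hl, hg⟩ := filterMap_range_spec _ (d-1) (d - 1 - (n+1)) hsome
  have hmin : (d-1) - (d - 1 - (n+1)) = min (d-1) (n+1) := by omega
  constructor
  · rw [lastList, hl, hmin]
  · intro p
    rw [lastList, hg p]
    by_cases hp : p < min (d-1) (n+1)
    · rw [if_pos (by omega), dif_pos hp]
      have hc : d ≤ n + 2 + (d - 1 - (n+1) + p) := by omega
      rw [if_pos hc]
      have hidx : n + 2 + (d - 1 - (n+1) + p) - d = n+1 - min (d-1) (n+1) + p := by omega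
      rw [hidx]
      exact colsOf_some.2 ⟨by omega, rfl⟩
    · rw [if_neg (by omega), dif_neg hp]

lemma seg_iff (W : Finset (List (Fin s))) (D : ℕ → Finset (Fin s)) :
    (∀ (i len : ℕ) (f : Fin len → Fin s),
        (∀ k : Fin len, f k ∈ D (i + (k : ℕ))) → Admissible W (List.ofFn f)) ↔
      ¬ HasFit W (fun m => some (D m)) := by
  constructor
  · rintro hseg ⟨v, hv, j, hfit⟩
    have hmem : ∀ k : Fin v.length, v[(k:ℕ)]'k.2 ∈ D (j + (k:ℕ)) := by
      intro k
      obtain ⟨B, hB, hvB⟩ := hfit (k:ℕ) k.2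
      have hB2 : some (D (j + (k:ℕ))) = some B := hB
      rw [Option.some_injective _ hB2]
      exact hvB
    have := hseg j v.length (fun k => v[(k:ℕ)]'k.2) hmem v hv
    rw [List.ofFn_getElem] at this
    exact this List.infix_rfl
  · intro hnf i len f hmem v hv hinf
    apply hnf
    rw [List.infix_iff_getElem?] at hinf
    obtain ⟨k, hk, hg⟩ := hinf
    refine ⟨v, hv, i + k, ?_⟩
    intro m hm
    refine ⟨D (i+k+m), rfl, ?_⟩
    have hgm := hg m hm
    rw [List.getElem?_ofFn] at hgm
    have hmk : m + k < len := by
      simp only [List.length_ofFn] at hk; omega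
    simp only [dif_pos hmk] at hgm
    have hfv : f ⟨m+k, hmk⟩ = v[m]'hm := Option.some_injective _ hgm
    rw [← hfv]
    have h3 : f ⟨m+k, hmk⟩ ∈ D (i + (m+k)) := hmem ⟨m+k, hmk⟩
    have h4 : i + (m+k) = i + k + m := by omega
    rwa [h4] at h3

def GoodL (W : Finset (List (Fin s))) (σ : List (Finset (Fin s))) : Prop :=
  (∀ B ∈ σ, B.Nonempty) ∧ ∀ m, ∃ ρ, ρ.length = m ∧ (∀ B ∈ ρ, B.Nonempty) ∧
    ¬ HasFit W (listCols (σ ++ ρ))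

lemma goodL_noFit {W : Finset (List (Fin s))} {σ : List (Finset (Fin s))} (h : GoodL W σ) :
    ¬ HasFit W (listCols σ) := by
  obtain ⟨ρ, hρ, -, hnf⟩ := h.2 0
  rw [List.length_eq_zero_iff.1 hρ, List.append_nil] at hnf
  exact hnf

lemma fits_prefix {W : Finset (List (Fin s))} {l₁ l₂ : List (Finset (Fin s))}
    (hpre : l₁ <+: l₂) (hfit : HasFit W (listCols l₁)) : HasFit W (listCols l₂) := by
  obtain ⟨v, hv, j, hfit⟩ := hfit
  refine ⟨v, hv, j, ?_⟩
  intro m hm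
  obtain ⟨B, hB, hvB⟩ := hfit m hm
  refine ⟨B, ?_, hvB⟩
  unfold listCols at hB ⊢
  obtain ⟨hlt, hval⟩ := List.getElem?_eq_some_iff.1 hB
  rw [List.getElem?_eq_some_iff]
  exact ⟨by have := hpre.length_le; omega, by rw [← hpre.getElem hlt]; exact hval⟩

lemma goodL_step (W : Finset (List (Fin s))) (σ : List (Finset (Fin s))) (hW : GoodL W σ) :
    ∃ B, GoodL W (σ ++ [B]) := by
  classical
  obtain ⟨hne, hext⟩ := hW
  choose ρ hlen hne' hfit using hext
  have hcons : ∀ m, ∃ B t, ρ (m+1) = B :: t := by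
    intro m
    cases hρ : ρ (m+1) with
    | nil => exfalso; have := hlen (m+1); rw [hρ] at this; simp at this
    | cons B t => exact ⟨B, t, rfl⟩
  choose hdf tlf hht using hcons
  obtain ⟨B, hBinf⟩ := Finite.exists_infinite_fiber hdf
  refine ⟨B, ?_, ?_⟩
  · intro B' hB'
    rcases List.mem_append.1 hB' with h | h
    · exact hne _ h
    · rw [List.mem_singleton] at h
      subst h
      obtain ⟨m, hm⟩ := (Set.infinite_coe_iff.1 hBinf).nonempty
      rw [Set.mem_preimage, Set.mem_singleton_iff] at hm
      rw [← hm]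
      apply hne' (m+1)
      rw [hht m]
      exact List.mem_cons_self
  · intro m
    have hgt : ∃ m', m ≤ m' ∧ hdf m' = B := by
      by_contra h
      push_neg at h
      have hfin : (hdf ⁻¹' {B}).Finite := by
        apply Set.Finite.subset (Set.finite_Iio m)
        intro y hy
        rw [Set.mem_preimage, Set.mem_singleton_iff] at hy
        rw [Set.mem_Iio]
        by_contra hc
        exact (h y (by omega) hy).elim
      rw [Set.infinite_coe_iff] at hBinf
      exact hBinf hfin
    obtain ⟨m', hm', hB'⟩ := hgt
    have hlen' : (tlf m').length = m' := by
      have := hlen (m'+1); rw [hht m'] at this; simpa using this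
    refine ⟨(tlf m').take m, by rw [List.length_take]; omega, ?_, ?_⟩
    · intro B' hB'mem
      apply hne' (m'+1)
      rw [hht m']
      exact List.mem_cons_of_mem _ (List.mem_of_mem_take hB'mem)
    · intro hhf
      apply hfit (m'+1)
      apply fits_prefix (l₁ := σ ++ [B] ++ (tlf m').take m) ?_ hhf
      rw [hht m', ← hB']
      rw [List.append_assoc, List.singleton_append]
      exact (List.prefix_append_right_inj σ).2 ((List.cons_prefix_cons).2 ⟨rfl, List.take_prefix _ _⟩)

noncomputable def chainL (W : Finset (List (Fin s))) (σ0 : {σ : List (Finset (Fin s)) // GoodL W σ}) :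
    ℕ → {σ : List (Finset (Fin s)) // GoodL W σ}
  | 0 => σ0
  | (k+1) =>
    let p := chainL W σ0 k
    ⟨p.1 ++ [Classical.choose (goodL_step W p.1 p.2)],
      Classical.choose_spec (goodL_step W p.1 p.2)⟩

lemma chainL_succ (W : Finset (List (Fin s))) (σ0) (k : ℕ) :
    (chainL W σ0 (k+1)).1 = (chainL W σ0 k).1
      ++ [Classical.choose (goodL_step W (chainL W σ0 k).1 (chainL W σ0 k).2)] := rfl

lemma chainL_length (W : Finset (List (Fin s))) (σ0) (k : ℕ) :
    (chainL W σ0 k).1.length = σ0.1.length + k := by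
  induction k with
  | zero => rfl
  | succ k ih =>
    rw [chainL_succ, List.length_append, ih]
    simp only [List.length_cons, List.length_nil]
    omega

lemma chainL_prefix (W : Finset (List (Fin s))) (σ0) {k k' : ℕ} (h : k ≤ k') :
    (chainL W σ0 k).1 <+: (chainL W σ0 k').1 := by
  induction k' with
  | zero =>
    have h0 : k = 0 := by omega
    rw [h0]
  | succ k' ih =>
    by_cases hk : k = k' + 1
    · rw [hk]
    · have h1 := ih (by omega)
      refine h1.trans ?_
      rw [chainL_succ]
      exact List.prefix_append _ _

end Prol
section ProlBridge

variable {s : ℕ}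

lemma prolongable_iff (W : Finset (List (Fin s))) (d : ℕ) (hd : 2 ≤ d)
    (hlen : ∀ u ∈ W, u.length ≤ d) (n : ℕ) (C : Fin (n+1) → Finset (Fin s)) :
    ProlongableSeq W C ↔ CoherentSeq W C ∧ ExtOK W (lastList d n C) := by
  obtain ⟨hLl, hLg⟩ := lastList_spec d n hd C
  constructor
  · rintro ⟨D, hDne, hDC, hseg⟩
    constructor
    · constructor
      · intro i; rw [← hDC i]; exact hDne _
      · intro f hf
        apply hseg 0 (n+1) f
        intro k
        have h0 : (0:ℕ) + (k:ℕ) = (k:ℕ) := by omega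
        rw [h0, hDC k]
        exact hf k
    · intro m
      refine ⟨List.ofFn (fun k : Fin m => D (n+1+(k:ℕ))), by simp, ?_, ?_⟩
      · intro B hB
        rw [List.mem_ofFn] at hB
        obtain ⟨k, hk⟩ := hB
        rw [← hk]
        exact hDne _
      · rintro ⟨v, hv, j, hfit⟩
        have hnf := (seg_iff W D).1 hseg
        apply hnf
        refine ⟨v, hv, (n+1 - min (d-1) (n+1)) + j, ?_⟩
        intro m' hm'
        obtain ⟨B, hB, hvB⟩ := hfit m' hm'
        refine ⟨B, ?_, hvB⟩
        unfold listCols at hB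
        rw [List.getElem?_append] at hB
        by_cases hc : j + m' < (lastList d n C).length
        · rw [if_pos hc, hLg (j+m'), dif_pos (by omega)] at hB
          have hq : n+1 - min (d-1) (n+1) + j + m' < n+1 := by omega
          have hD : D (n+1 - min (d-1) (n+1) + j + m') = C ⟨n+1 - min (d-1) (n+1) + (j+m'), by omega⟩ := by
            have := hDC ⟨n+1 - min (d-1) (n+1) + j + m', hq⟩
            rw [this]
            exact congrArg C (Fin.ext (by simp; omega))
          show some (D (n+1 - min (d-1) (n+1) + j + m')) = some B
          rw [hD, hB]
        · rw [if_neg hc, List.getElem?_ofFn] at hB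
          rw [hLl] at hc
          by_cases hc2 : j + m' - (lastList d n C).length < m
          · simp only [dif_pos hc2] at hB
            show some (D (n+1 - min (d-1) (n+1) + j + m')) = some B
            rw [← hB]
            have hidx : n+1 - min (d-1) (n+1) + j + m'
                = n + 1 + (j + m' - (lastList d n C).length) := by
              rw [hLl]
              omega
            rw [hidx]
          · simp only [dif_neg hc2] at hB
            exact absurd hB (by simp)
  · rintro ⟨hcoh, hext⟩
    obtain ⟨hne, hnofit⟩ := (coherent_iff W C).1 hcoh
    have hgood : GoodL W (List.ofFn C) := by
      constructor
      · intro B hB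
        rw [List.mem_ofFn] at hB
        obtain ⟨i, hi⟩ := hB
        rw [← hi]
        exact hne i
      · intro m
        obtain ⟨ρ, hρl, hρne, hρnf⟩ := hext m
        refine ⟨ρ, hρl, hρne, ?_⟩
        rintro ⟨v, hv, j, hfit⟩
        rcases Nat.eq_zero_or_pos v.length with h0 | h0
        · exact hρnf ⟨v, hv, 0, fun m' hm' => absurd hm' (by omega)⟩
        · have hvd := hlen v hv
          by_cases hcase : j + v.length ≤ n+1
          · apply hnofit
            refine ⟨v, hv, j, ?_⟩
            intro m' hm'
            obtain ⟨B, hB, hvB⟩ := hfit m' hm'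
            unfold listCols at hB
            rw [List.getElem?_append,
              if_pos (by simp only [List.length_append, List.length_ofFn]; omega)] at hB
            rw [List.getElem?_ofFn] at hB
            have hjm : j + m' < n+1 := by omega
            simp only [dif_pos hjm] at hB
            exact ⟨B, colsOf_some.2 ⟨hjm, (Option.some_injective _ hB).symm⟩, hvB⟩
          · apply hρnf
            refine ⟨v, hv, j - (n+1 - min (d-1) (n+1)), ?_⟩
            have hjq : n+1 - min (d-1) (n+1) ≤ j := by omega
            intro m' hm'
            obtain ⟨B, hB, hvB⟩ := hfit m' hm'
            refine ⟨B, ?_, hvB⟩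
            unfold listCols at hB ⊢
            rw [List.getElem?_append] at hB ⊢
            by_cases hc2 : j + m' < n+1
            · rw [if_pos (by simp only [List.length_ofFn]; omega)] at hB
              rw [List.getElem?_ofFn] at hB
              simp only [dif_pos hc2] at hB
              rw [if_pos (by rw [hLl]; omega), hLg, dif_pos (by omega)]
              rw [← hB]
              exact congrArg some (congrArg C (Fin.ext (by simp; omega)))
            · rw [if_neg (by simp only [List.length_ofFn]; omega)] at hB
              rw [if_neg (by rw [hLl]; omega)]
              have hidx : j - (n+1 - min (d-1) (n+1)) + m' - (lastList d n C).length
                  = j + m' - (List.ofFn C).length := by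
                rw [hLl, List.length_ofFn]
                omega
              rw [hidx]
              exact hB
    set σ0 : {σ : List (Finset (Fin s)) // GoodL W σ} := ⟨List.ofFn C, hgood⟩ with hσ0
    have hlen0 : σ0.1.length = n+1 := by rw [hσ0]; simp
    set D : ℕ → Finset (Fin s) := fun q => (chainL W σ0 (q+1)).1[q]'(by
      rw [chainL_length, hlen0]; omega) with hD
    have hDk : ∀ k q (h : q < (chainL W σ0 k).1.length), (chainL W σ0 k).1[q] = D q := by
      intro k q h
      have h2 : q < (chainL W σ0 (q+1)).1.length := by rw [chainL_length, hlen0]; omega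
      rcases le_total k (q+1) with hle | hle
      · exact (chainL_prefix W σ0 hle).getElem h
      · exact ((chainL_prefix W σ0 hle).getElem h2).symm
    refine ⟨D, ?_, ?_, ?_⟩
    · intro q
      exact (chainL W σ0 (q+1)).2.1 _ (List.getElem_mem _)
    · intro i
      have h0 : (i:ℕ) < (chainL W σ0 0).1.length := by rw [chainL_length, hlen0]; omega
      rw [← hDk 0 (i:ℕ) h0]
      show (List.ofFn C)[(i:ℕ)]'(by simp; omega) = C i
      rw [List.getElem_ofFn]
    · rw [seg_iff]
      rintro ⟨v, hv, j, hfit⟩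
      apply goodL_noFit (chainL W σ0 (j + v.length)).2
      refine ⟨v, hv, j, ?_⟩
      intro m hm
      obtain ⟨B, hB, hvB⟩ := hfit m hm
      have hB2 : some (D (j+m)) = some B := hB
      have hq : j + m < (chainL W σ0 (j + v.length)).1.length := by
        rw [chainL_length, hlen0]; omega
      refine ⟨B, ?_, hvB⟩
      unfold listCols
      rw [List.getElem?_eq_getElem hq, hDk (j + v.length) (j+m) hq]
      exact hB2

lemma prolongable_anti (W : Finset (List (Fin s))) {n : ℕ}
    {C C' : Fin (n+1) → Finset (Fin s)} (hsub : ∀ k, C k ⊆ C' k)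
    (hne : ∀ k, (C k).Nonempty) (h : ProlongableSeq W C') : ProlongableSeq W C := by
  obtain ⟨D', hne', hagree, hseg⟩ := h
  refine ⟨fun q => if h : q < n+1 then C ⟨q, h⟩ else D' q, ?_, ?_, ?_⟩
  · intro q
    by_cases h : q < n+1
    · simp only [dif_pos h]; exact hne _
    · simp only [dif_neg h]; exact hne' _
  · intro i
    simp only [dif_pos i.isLt]
  · intro i len f hf
    apply hseg i len f
    intro k
    have hfk := hf k
    by_cases h : i + (k:ℕ) < n+1
    · simp only [dif_pos h] at hfk
      have hDq : D' (i+(k:ℕ)) = C' ⟨i+(k:ℕ), h⟩ := hagree ⟨i+(k:ℕ), h⟩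
      rw [hDq]
      exact hsub ⟨i + (k:ℕ), h⟩ hfk
    · simp only [dif_neg h] at hfk
      exact hfk

lemma maxprol_iff (W : Finset (List (Fin s))) {n : ℕ} (C : Fin (n+1) → Finset (Fin s)) :
    MaxProlongable W C ↔ ProlongableSeq W C ∧
      ∀ (i : Fin (n+1)) (x : Fin s), x ∉ C i →
        ¬ ProlongableSeq W (Function.update C i (insert x (C i))) := by
  constructor
  · rintro ⟨hprol, hmax⟩
    refine ⟨hprol, fun i x hx hp => ?_⟩
    have hsub : ∀ k, C k ⊆ Function.update C i (insert x (C i)) k := by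
      intro k
      by_cases hk : k = i
      · subst hk; rw [Function.update_self]; exact Finset.subset_insert _ _
      · rw [Function.update_of_ne hk]
    have hnee : Function.update C i (insert x (C i)) ≠ C := by
      intro hc
      apply hx
      have h2 : Function.update C i (insert x (C i)) i = C i := by rw [hc]
      rw [Function.update_self] at h2
      rw [← h2]
      exact Finset.mem_insert_self _ _
    exact hnee (hmax _ hp hsub)
  · rintro ⟨hprol, hup⟩
    have hCne : ∀ k, (C k).Nonempty := by
      obtain ⟨D, h1, h2, -⟩ := hprol
      intro k
      rw [← h2 k]
      exact h1 _
    refine ⟨hprol, fun C' hprol' hsub => ?_⟩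
    by_contra hne
    have hex : ∃ i, C' i ≠ C i := by
      by_contra h; push_neg at h; exact hne (funext h)
    obtain ⟨i, hi⟩ := hex
    have hex2 : ∃ x, x ∈ C' i ∧ x ∉ C i := by
      by_contra h
      push_neg at h
      exact hi (Finset.Subset.antisymm (fun x hx => by
        by_contra hc
        exact hc (h x hx)) (hsub i))
    obtain ⟨x, hx', hx⟩ := hex2
    apply hup i x hx
    apply prolongable_anti W (C' := C') ?_ ?_ hprol'
    · intro k
      by_cases hk : k = i
      · subst hk
        rw [Function.update_self]
        exact Finset.insert_subset hx' (hsub _)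
      · rw [Function.update_of_ne hk]
        exact hsub k
    · intro k
      by_cases hk : k = i
      · subst hk; rw [Function.update_self]; exact Finset.insert_nonempty _ _
      · rw [Function.update_of_ne hk]; exact hCne k

end ProlBridge
section WinProl

variable {s : ℕ}

def tauWin (d : ℕ) (win : Fin (2*d-1) → Option (Finset (Fin s))) (e : ℕ) :
    List (Finset (Fin s)) :=
  (List.range (d-1)).filterMap (fun r => wext win (e+1+r))

def tauWinX (d : ℕ) (win : Fin (2*d-1) → Option (Finset (Fin s))) (e : ℕ) (x : Fin s) :
    List (Finset (Fin s)) :=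
  (List.range (d-1)).filterMap (fun r => updO (wext win) (d-1) x (e+1+r))

def QpWin (W : Finset (List (Fin s))) (d : ℕ)
    (win : Fin (2*d-1) → Option (Finset (Fin s))) : Prop :=
  ∀ B, wext win (d-1) = some B →
    B.Nonempty ∧
    (¬ ∃ v ∈ W, ∃ j, j ≤ d-1 ∧ d-1 ≤ j + v.length ∧ fitsO v (wext win) j) ∧
    (wext win d = none → ExtOK W (tauWin d win 0)) ∧
    (∀ x, x ∉ B →
      (∃ v ∈ W, ∃ j, j ≤ d-1 ∧ d-1 ≤ j + v.length ∧ fitsO v (updO (wext win) (d-1) x) j) ∨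
      (∃ e, e < d-1 ∧ (wext win (d-1+e)).isSome ∧ wext win (d+e) = none ∧
        ¬ ExtOK W (tauWinX d win e x)))

lemma tauWin_eq (d : ℕ) (hd : 2 ≤ d) (n : ℕ) (C : Fin (n+1) → Finset (Fin s))
    (i e : ℕ) (hie : i + e = n) (he : e ≤ d-1) :
    tauWin d (winOf (2*d-1) n C (i+d)) e = lastList d n C := by
  unfold tauWin lastList
  apply List.filterMap_congr
  intro r hr
  rw [List.mem_range] at hr
  rw [wext_winOf (by omega), padw_eq_colsOf]
  by_cases hc : d ≤ n + 2 + r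
  · rw [if_pos (by omega), if_pos hc]
    congr 1
    omega
  · rw [if_neg (by omega), if_neg hc]

lemma lastList_update (d n : ℕ) (C : Fin (n+1) → Finset (Fin s)) (i0 : Fin (n+1)) (x : Fin s) :
    lastList d n (Function.update C i0 (insert x (C i0)))
      = (List.range (d-1)).filterMap
          (fun r => if d ≤ n+2+r then updO (colsOf n C) (i0:ℕ) x (n+2+r-d) else none) := by
  unfold lastList
  rw [colsOf_update]

lemma lastList_update_low (d : ℕ) (hd : 2 ≤ d) (n : ℕ) (C : Fin (n+1) → Finset (Fin s))
    (i0 : Fin (n+1)) (x : Fin s) (hlow : (i0:ℕ) + (d-1) ≤ n) :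
    lastList d n (Function.update C i0 (insert x (C i0))) = lastList d n C := by
  rw [lastList_update]
  unfold lastList
  apply List.filterMap_congr
  intro r hr
  rw [List.mem_range] at hr
  by_cases hc : d ≤ n+2+r
  · rw [if_pos hc, if_pos hc]
    simp only [updO]
    rw [if_neg (by omega)]
  · rw [if_neg hc, if_neg hc]

lemma tauWinX_eq (d : ℕ) (hd : 2 ≤ d) (n : ℕ) (C : Fin (n+1) → Finset (Fin s))
    (i e : ℕ) (x : Fin s) (hie : i + e = n) (he : e ≤ d-1) (hi : i < n+1) :
    tauWinX d (winOf (2*d-1) n C (i+d)) e x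
      = lastList d n (Function.update C ⟨i, hi⟩ (insert x (C ⟨i, hi⟩))) := by
  rw [lastList_update]
  show (List.range (d-1)).filterMap _
    = (List.range (d-1)).filterMap (fun r => if d ≤ n+2+r then updO (colsOf n C) i x (n+2+r-d) else none)
  apply List.filterMap_congr
  intro r hr
  rw [List.mem_range] at hr
  simp only [updO]
  by_cases hc : e+1+r = d-1
  · rw [if_pos hc]
    rw [wext_winOf (by omega), padw_eq_colsOf, if_pos (by omega)]
    have hcond : d ≤ n+2+r := by omega
    rw [if_pos hcond]
    have hidx2 : n+2+r-d = i := by omega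
    rw [hidx2, if_pos rfl]
    have hidx1 : i + d + (e+1+r) - (2*d-1) = i := by omega
    rw [hidx1]
  · rw [if_neg hc]
    rw [wext_winOf (by omega), padw_eq_colsOf]
    by_cases hc2 : d ≤ n+2+r
    · rw [if_pos (by omega), if_pos hc2, if_neg (by omega)]
      congr 1
      omega
    · rw [if_neg (by omega), if_neg hc2]

theorem maxprol_loc (W : Finset (List (Fin s))) (d : ℕ) (hd : 2 ≤ d)
    (hlen : ∀ u ∈ W, u.length ≤ d) (n : ℕ) (C : Fin (n+1) → Finset (Fin s)) :
    MaxProlongable W C ↔ Loc (2*d-1) (QpWin W d) n C := by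
  rw [maxprol_iff]
  constructor
  · rintro ⟨hprol, hup⟩
    obtain ⟨hcoh, hext⟩ := (prolongable_iff W d hd hlen n C).1 hprol
    obtain ⟨hne, hnofit⟩ := (coherent_iff W C).1 hcoh
    intro t B hB
    rw [wext_winOf (by omega), padw_eq_colsOf] at hB
    have hwt : 2*d-1 ≤ t + (d-1) := by
      by_contra h
      rw [if_neg h] at hB
      simp at hB
    rw [if_pos hwt] at hB
    obtain ⟨hlt, rfl⟩ := colsOf_some.1 hB
    obtain ⟨i, rfl⟩ : ∃ i, t = i + d := ⟨t - d, by omega⟩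
    have hin : i < n + 1 := by omega
    have hIeq : (⟨i + d + (d-1) - (2*d-1), hlt⟩ : Fin (n+1)) = ⟨i, hin⟩ :=
      Fin.ext (by simp; omega)
    refine ⟨hne _, ?_, ?_, ?_⟩
    · rintro ⟨v, hv, j, hj1, hj2, hfit⟩
      rcases Nat.eq_zero_or_pos v.length with h0 | h0
      · have hvnil : v = [] := List.eq_nil_of_length_eq_zero h0
        have := hcoh.2 (fun k => (hne k).choose) (fun k => (hne k).choose_spec) v hv
        rw [hvnil] at this
        exact this List.nil_infix
      · apply hnofit
        obtain ⟨B0, hB0, -⟩ := hfit 0 (by omega)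
        have hjw : j + 0 < 2*d-1 := by
          by_contra h
          unfold wext at hB0
          rw [dif_neg h] at hB0
          simp at hB0
        rw [wext_winOf hjw, padw_eq_colsOf] at hB0
        have hwt0 : 2*d-1 ≤ i + d + (j+0) := by
          by_contra h
          rw [if_neg h] at hB0
          simp at hB0
        refine ⟨v, hv, i + d + j - (2*d-1), fitsO_congr ?_ hfit⟩
        intro m hm
        have hvd := hlen v hv
        have hjm : j + m < 2*d-1 := by omega
        rw [wext_winOf hjm, padw_eq_colsOf, if_pos (by omega)]
        congr 1
        omega
    · intro hnone
      rw [wext_winOf (by omega), padw_eq_colsOf, if_pos (by omega)] at hnone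
      have hieqn : i = n := by
        by_contra hcc
        have h2 : i + d + d - (2*d-1) < n+1 := by omega
        unfold colsOf at hnone
        rw [dif_pos h2] at hnone
        simp at hnone
      rw [tauWin_eq d hd n C i 0 (by omega) (by omega)]
      exact hext
    · intro x hx
      have hx' : x ∉ C ⟨i, hin⟩ := by rwa [hIeq] at hx
      have hnp := hup ⟨i, hin⟩ x hx'
      rw [prolongable_iff W d hd hlen] at hnp
      by_cases hcu : CoherentSeq W (Function.update C ⟨i, hin⟩ (insert x (C ⟨i, hin⟩)))
      · right
        have hnext : ¬ ExtOK W (lastList d n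
            (Function.update C ⟨i, hin⟩ (insert x (C ⟨i, hin⟩)))) :=
          fun he => hnp ⟨hcu, he⟩
        have hed : n - i < d - 1 := by
          by_contra hge
          apply hnext
          rw [lastList_update_low d hd n C ⟨i, hin⟩ x (show i + (d-1) ≤ n by omega)]
          exact hext
        refine ⟨n - i, hed, ?_, ?_, ?_⟩
        · rw [wext_winOf (by omega), padw_eq_colsOf, if_pos (by omega)]
          have hidx : i + d + (d-1+(n-i)) - (2*d-1) = n := by omega
          rw [hidx]
          unfold colsOf
          rw [dif_pos (by omega)]
          simp
        · rw [wext_winOf (by omega), padw_eq_colsOf, if_pos (by omega)]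
          have hidx : i + d + (d+(n-i)) - (2*d-1) = n+1 := by omega
          rw [hidx]
          unfold colsOf
          rw [dif_neg (by omega)]
        · rw [tauWinX_eq d hd n C i (n-i) x (by omega) (by omega) hin]
          exact hnext
      · left
        rw [coherent_iff] at hcu
        have hne' : ∀ k, (Function.update C ⟨i, hin⟩ (insert x (C ⟨i, hin⟩)) k).Nonempty := by
          intro k
          by_cases hk : k = ⟨i, hin⟩
          · subst hk; rw [Function.update_self]; exact Finset.insert_nonempty _ _
          · rw [Function.update_of_ne hk]; exact hne k
        have hfitup : HasFit W (colsOf n (Function.update C ⟨i, hin⟩ (insert x (C ⟨i, hin⟩)))) := by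
          by_contra hh
          exact hcu ⟨hne', hh⟩
        rw [colsOf_update] at hfitup
        have hco : ((⟨i, hin⟩ : Fin (n+1)) : ℕ) = i := rfl
        rw [hco] at hfitup
        obtain ⟨v, hv, j, hfitv⟩ := hfitup
        have hcov := fit_covers hnofit hv hfitv
        have hvd := hlen v hv
        refine ⟨v, hv, j + (d-1) - i, by omega, by omega, fitsO_congr ?_ hfitv⟩
        intro m hm
        have hjm : (j + (d-1) - i) + m < 2*d-1 := by omega
        simp only [updO]
        have hcentr : ((j + (d-1) - i) + m = d-1) ↔ (j + m = i) := by omega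
        by_cases hc : j + m = i
        · rw [if_pos hc, if_pos (hcentr.2 hc)]
          congr 1
          rw [wext_winOf hjm, padw_eq_colsOf, if_pos (by omega)]
          congr 1
          omega
        · rw [if_neg hc, if_neg (fun h => hc (hcentr.1 h))]
          rw [wext_winOf hjm, padw_eq_colsOf, if_pos (by omega)]
          congr 1
          omega
  · intro hloc
    have hcen : ∀ i : Fin (n+1),
        wext (winOf (2*d-1) n C ((i:ℕ)+d)) (d-1) = some (C i) := by
      intro i
      rw [wext_winOf (by omega), padw_eq_colsOf, if_pos (by omega)]
      have hidx : (i:ℕ) + d + (d-1) - (2*d-1) = (i:ℕ) := by omega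
      rw [hidx]
      exact colsOf_some.2 ⟨i.isLt, by rw [Fin.eta]⟩
    have hne : ∀ i, (C i).Nonempty := fun i => ((hloc ((i:ℕ)+d)) _ (hcen i)).1
    have hnofit : ¬ HasFit W (colsOf n C) := by
      rintro ⟨v, hv, j0, hfit⟩
      rcases Nat.eq_zero_or_pos v.length with h0 | h0
      · obtain ⟨-, hnf, -⟩ := hloc ((0:ℕ)+d) _ (hcen ⟨0, by omega⟩)
        exact hnf ⟨v, hv, d-1, le_rfl, by omega, fun m hm => absurd hm (by omega)⟩
      · have hj0 : j0 < n+1 := by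
          obtain ⟨B0, hB0, -⟩ := hfit 0 h0
          rw [Nat.add_zero] at hB0
          obtain ⟨hlt, -⟩ := colsOf_some.1 hB0
          omega
        obtain ⟨-, hnf, -⟩ := hloc (j0+d) _ (hcen ⟨j0, hj0⟩)
        apply hnf
        refine ⟨v, hv, d-1, le_rfl, by omega, fitsO_congr ?_ hfit⟩
        intro m hm
        have hvd := hlen v hv
        rw [wext_winOf (by omega), padw_eq_colsOf, if_pos (by omega)]
        congr 1
        omega
    have hcoh := (coherent_iff W C).2 ⟨hne, hnofit⟩
    have hext : ExtOK W (lastList d n C) := by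
      obtain ⟨-, -, hbd, -⟩ := hloc (n+d) _ (hcen ⟨n, by omega⟩)
      have hnone : wext (winOf (2*d-1) n C (n+d)) d = none := by
        rw [wext_winOf (by omega), padw_eq_colsOf, if_pos (by omega)]
        unfold colsOf
        rw [dif_neg (by omega)]
      have h2 := hbd hnone
      rwa [tauWin_eq d hd n C n 0 (by omega) (by omega)] at h2
    rw [prolongable_iff W d hd hlen]
    refine ⟨⟨hcoh, hext⟩, ?_⟩
    intro i x hx
    rw [prolongable_iff W d hd hlen]
    rintro ⟨hcupd, hextupd⟩
    obtain ⟨-, -, -, hfx⟩ := hloc ((i:ℕ)+d) _ (hcen i)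
    rcases hfx x hx with hleft | hright
    · have hfitglob : HasFit W (updO (colsOf n C) (i:ℕ) x) := by
        obtain ⟨v, hv, j', hj'1, hj'2, hfit⟩ := hleft
        rcases Nat.eq_zero_or_pos v.length with h0 | h0
        · exact ⟨v, hv, 0, fun m hm => absurd hm (by omega)⟩
        · obtain ⟨B0, hB0, -⟩ := hfit 0 h0
          obtain ⟨B1, hB1⟩ := updO_some hB0
          have hj'w : j' + 0 < 2*d-1 := by
            by_contra h
            unfold wext at hB1
            rw [dif_neg h] at hB1
            simp at hB1
          rw [wext_winOf hj'w, padw_eq_colsOf] at hB1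
          have hwt : 2*d-1 ≤ (i:ℕ) + d + (j'+0) := by
            by_contra h
            rw [if_neg h] at hB1
            simp at hB1
          refine ⟨v, hv, (i:ℕ)+d+j' - (2*d-1), fitsO_congr ?_ hfit⟩
          intro m hm
          have hvd := hlen v hv
          have hjm : j' + m < 2*d-1 := by omega
          simp only [updO]
          have hcentr : (j'+m = d-1) ↔ ((i:ℕ)+d+j'-(2*d-1)+m = (i:ℕ)) := by omega
          by_cases hc : j'+m = d-1
          · rw [if_pos hc, if_pos (hcentr.1 hc)]
            congr 1
            rw [wext_winOf hjm, padw_eq_colsOf, if_pos (by omega)]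
            congr 1
            omega
          · rw [if_neg hc, if_neg (fun h => hc (hcentr.2 h))]
            rw [wext_winOf hjm, padw_eq_colsOf, if_pos (by omega)]
            congr 1
            omega
      rw [coherent_iff] at hcupd
      apply hcupd.2
      rw [colsOf_update]
      exact hfitglob
    · obtain ⟨e, hed, hsome, hnonee, hnext⟩ := hright
      have hie : (i:ℕ) + e = n := by
        rw [wext_winOf (by omega), padw_eq_colsOf, if_pos (by omega)] at hsome
        have hidx : (i:ℕ) + d + (d-1+e) - (2*d-1) = (i:ℕ) + e := by omega
        rw [hidx] at hsome
        rw [wext_winOf (by omega), padw_eq_colsOf, if_pos (by omega)] at hnonee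
        have hidx2 : (i:ℕ) + d + (d+e) - (2*d-1) = (i:ℕ) + e + 1 := by omega
        rw [hidx2] at hnonee
        have h1 : (i:ℕ) + e < n + 1 := by
          by_contra h
          unfold colsOf at hsome
          rw [dif_neg h] at hsome
          simp at hsome
        have h2 : ¬ ((i:ℕ) + e + 1 < n + 1) := by
          intro h
          unfold colsOf at hnonee
          rw [dif_pos h] at hnonee
          simp at hnonee
        omega
      apply hnext
      have h3 := tauWinX_eq d hd n C (i:ℕ) e x hie (by omega) i.isLt
      rw [h3]
      have hIeta : (⟨(i:ℕ), i.isLt⟩ : Fin (n+1)) = i := Fin.eta i i.isLt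
      rw [hIeta]
      exact hextupd

end WinProl
/-- Fix a finite alphabet, `d ≥ 2` and a finite set `W` of
forbidden words of length at most `d`.  Let `ā_n` (resp. `a_n`) be the number of
maximal coherent (resp. maximal prolongable) sequences `(C_0,…,C_n)`.  Then the
generating functions `∑ ā_n tⁿ` and `∑ a_n tⁿ` are rational functions. -/
theorem statement16 (s d : ℕ) (hd : 2 ≤ d) (W : Finset (List (Fin s)))
    (hlen : ∀ u ∈ W, u.length ≤ d) :
    (∃ p q : Polynomial ℚ, q ≠ 0 ∧
        (PowerSeries.mk fun n : ℕ =>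
            ((Nat.card { C : Fin (n + 1) → Finset (Fin s) // MaxCoherent W C } : ℚ))) *
          (q : PowerSeries ℚ) = (p : PowerSeries ℚ)) ∧
      (∃ p q : Polynomial ℚ, q ≠ 0 ∧
        (PowerSeries.mk fun n : ℕ =>
            ((Nat.card { C : Fin (n + 1) → Finset (Fin s) // MaxProlongable W C } : ℚ))) *
          (q : PowerSeries ℚ) = (p : PowerSeries ℚ)) := by
  constructor
  · obtain ⟨p, q, hq, hpq⟩ := loc_gf (A := Finset (Fin s)) (2*d-1) (QcWin W d) (by omega)
    refine ⟨p, q, hq, ?_⟩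
    have hfun : (fun n : ℕ =>
        ((Nat.card { C : Fin (n + 1) → Finset (Fin s) // MaxCoherent W C } : ℚ)))
        = fun n : ℕ =>
          ((Nat.card {C : Fin (n+1) → Finset (Fin s) // Loc (2*d-1) (QcWin W d) n C}) : ℚ) := by
      funext n
      congr 1
      exact Nat.card_congr (Equiv.subtypeEquivRight (fun C => maxcoh_loc W d hd hlen n C))
    rw [congrArg PowerSeries.mk hfun]
    exact hpq
  · obtain ⟨p, q, hq, hpq⟩ := loc_gf (A := Finset (Fin s)) (2*d-1) (QpWin W d) (by omega)
    refine ⟨p, q, hq, ?_⟩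
    have hfun : (fun n : ℕ =>
        ((Nat.card { C : Fin (n + 1) → Finset (Fin s) // MaxProlongable W C } : ℚ)))
        = fun n : ℕ =>
          ((Nat.card {C : Fin (n+1) → Finset (Fin s) // Loc (2*d-1) (QpWin W d) n C}) : ℚ) := by
      funext n
      congr 1
      exact Nat.card_congr (Equiv.subtypeEquivRight (fun C => maxprol_loc W d hd hlen n C))
    rw [congrArg PowerSeries.mk hfun]
    exact hpq
end
end
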